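/- arXiv:2108.11087 — 5 statements merged into one kernel-verified Lean document; each statement's English description precedes it below -/
import Mathlib

section
/- Let (S, 𝔫) be a commutative Noetherian local ring and I an 𝔫-primary ideal; write R = S/I with maximal ideal 𝔪 = 𝔫/I and v = v_S(I) = max{n | I ⊆ 𝔫^n}. Then the top socle degree of R satisfies s(R) ≤ ℓ_S(R) − Σ_{i=0}^{v−1} h_S(i) + v − 1. -/
open IsLocalRing

/-- The length of a module: the Krull dimension of its lattice of submodules. -/
noncomputable def moduleLength (R M : Type*) [Ring R] [AddCommGroup M] [Module R M] :
    WithBot ℕ∞ :=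
  Order.krullDim (Submodule R M)

section Aux

/-- For an order with a top element, the Krull dimension equals the height of `⊤`. -/
lemma aux_krullDim_eq_height_top (α : Type*) [PartialOrder α] [OrderTop α] :
    Order.krullDim α = ((Order.height (⊤ : α) : ℕ∞) : WithBot ℕ∞) := by
  have : Nonempty α := ⟨⊤⟩
  apply le_antisymm
  · rw [Order.krullDim_eq_iSup_length]
    apply WithBot.coe_le_coe.mpr
    exact iSup_le fun p => le_trans Order.length_le_height_last (Order.height_mono le_top)
  · exact Order.height_le_krullDim ⊤

/-- If the height of `⊤` is the natural number `n`, then there is a strictly increasing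
series from `⊥` to `⊤` of length `n`. -/
lemma aux_exists_full_series {α : Type*} [PartialOrder α] [BoundedOrder α] {n : ℕ}
    (h : Order.height (⊤ : α) = n) :
    ∃ p : LTSeries α, p.head = ⊥ ∧ p.last = ⊤ ∧ p.length = n := by
  obtain ⟨p, hlast, hlen⟩ := Order.exists_series_of_height_eq_coe ⊤ h
  by_cases hh : p.head = ⊥
  · exact ⟨p, hh, hlast, hlen⟩
  · exfalso
    have hb : (⊥ : α) < p.head := lt_of_le_of_ne bot_le (Ne.symm hh)
    have := Order.length_le_height_last (p := p.cons ⊥ hb)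
    rw [RelSeries.last_cons, hlast, h, RelSeries.cons_length, hlen] at this
    exact absurd this (by exact_mod_cast Nat.not_succ_le_self n)

/-- If there is a strict series from `a` to `b` of length `n` and `a` has finite height,
then `height a + n ≤ height b`. -/
lemma aux_height_add_le {α : Type*} [PartialOrder α] {a b : α}
    (hfin : Order.height a ≠ ⊤) {n : ℕ}
    (hchain : ∃ q : LTSeries α, q.head = a ∧ q.last = b ∧ q.length = n) :
    Order.height a + n ≤ Order.height b := by
  obtain ⟨m, hm⟩ := WithTop.ne_top_iff_exists.mp hfin
  obtain ⟨p, hp_last, hp_len⟩ := Order.exists_series_of_height_eq_coe a hm.symm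
  obtain ⟨q, hq_head, hq_last, hq_len⟩ := hchain
  have hconn : p.last = q.head := by rw [hp_last, hq_head]
  have := Order.length_le_height_last (p := p.smash q hconn)
  rw [RelSeries.last_smash, RelSeries.smash_length, hp_len, hq_len, hq_last] at this
  rw [← hm]
  exact_mod_cast this

end Aux

/-- Let `(S, 𝔫)` be a Noetherian local ring, `I` an `𝔫`-primary ideal,
`R = S ⧸ I`, `v = v_S(I) = max{n ∣ I ⊆ 𝔫^n}`, `ℓ = ℓ_S(R)`, and `hS` the Hilbert function
of `S` (`hS i = ℓ_S(𝔫^i/𝔫^(i+1))`).  If `s` is the top socle degree of `R` then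
`s ≤ ℓ − Σ_{i=0}^{v−1} hS i + v − 1`. -/
theorem top_socle_degree_le
    (S : Type*) [CommRing S] [IsNoetherianRing S] [IsLocalRing S]
    (I : Ideal S) (hprim : I.radical = maximalIdeal S)
    (ℓ : ℕ) (hℓ : moduleLength S (S ⧸ I) = (ℓ : ℕ∞))
    (hS : ℕ → ℕ)
    (hhS : ∀ i : ℕ, moduleLength S
        (↥(maximalIdeal S ^ i) ⧸
          Submodule.comap (maximalIdeal S ^ i).subtype (maximalIdeal S ^ (i + 1))) =
        ((hS i : ℕ∞) : WithBot ℕ∞))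
    (v : ℕ) (hv : IsGreatest {n : ℕ | I ≤ maximalIdeal S ^ n} v)
    (s : ℕ)
    (hs : IsGreatest {n : ℕ |
        ((maximalIdeal S).map (Ideal.Quotient.mk I)) ^ n ≠ ⊥} s) :
    (s : ℤ) ≤ (ℓ : ℤ) - (∑ i ∈ Finset.range v, (hS i : ℤ)) + v - 1 := by
  set 𝔫 := maximalIdeal S with h𝔫
  have h𝔫ne : 𝔫 ≠ ⊤ := (maximalIdeal.isMaximal S).ne_top
  have hIne : I ≠ ⊤ := by
    intro h
    rw [h, Ideal.radical_top] at hprim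
    exact h𝔫ne hprim.symm
  have hI𝔫 : I ≤ 𝔫 := hprim ▸ Ideal.le_radical
  have : Nontrivial (S ⧸ I) := Ideal.Quotient.nontrivial_iff.mpr hIne
  have : IsLocalRing (S ⧸ I) :=
    IsLocalRing.of_surjective' (Ideal.Quotient.mk I) Ideal.Quotient.mk_surjective
  -- the filtration of S ⧸ I by images of powers of 𝔫
  set M : ℕ → Submodule S (S ⧸ I) := fun i => Submodule.map I.mkQ (𝔫 ^ i) with hM
  -- identification of image-of-power with the power of the image ideal
  have hrestrict : ∀ J : Ideal S,
      (Submodule.restrictScalars S (Ideal.map (Ideal.Quotient.mk I) J)) =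
        Submodule.map I.mkQ J := by
    intro J
    ext x
    simp only [Submodule.restrictScalars_mem, Submodule.mem_map]
    rw [Ideal.mem_map_iff_of_surjective _ Ideal.Quotient.mk_surjective]
    rfl
  -- M 0 = ⊤
  have hM0 : M 0 = ⊤ := by
    simp [hM, Submodule.map_top, Submodule.range_mkQ]
  -- heights are finite
  have hTopLe : Order.height (⊤ : Submodule S (S ⧸ I)) ≤ (ℓ : ℕ∞) := by
    have h1 := Order.height_le_krullDim (⊤ : Submodule S (S ⧸ I))
    rw [show Order.krullDim (Submodule S (S ⧸ I)) = moduleLength S (S ⧸ I) from rfl,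
      hℓ] at h1
    exact_mod_cast h1
  have hfin : ∀ i, Order.height (M i) ≠ ⊤ := by
    intro i
    have := (Order.height_mono (le_top : M i ≤ ⊤)).trans hTopLe
    intro h
    rw [h] at this
    exact ENat.coe_ne_top ℓ (top_le_iff.mp this)
  have hfin' : ∀ i, Order.height (M i) ≤ (ℓ : ℕ∞) := fun i =>
    (Order.height_mono (le_top : M i ≤ ⊤)).trans hTopLe
  -- STEP 1: for i < v, height (M (i+1)) + hS i ≤ height (M i)
  have step1 : ∀ i < v, Order.height (M (i + 1)) + (hS i : ℕ∞) ≤ Order.height (M i) := by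
    intro i hiv
    apply aux_height_add_le (hfin (i + 1))
    -- the subquotient
    set K : Submodule S ↥(𝔫 ^ i) := Submodule.comap (𝔫 ^ i).subtype (𝔫 ^ (i + 1)) with hK
    set Q := (↥(𝔫 ^ i) ⧸ K)
    have hheight : Order.height (⊤ : Submodule S Q) = (hS i : ℕ∞) := by
      have h1 := hhS i
      rw [show moduleLength S Q = Order.krullDim (Submodule S Q) from rfl,
        aux_krullDim_eq_height_top] at h1
      exact_mod_cast h1
    obtain ⟨p, hp_head, hp_last, hp_len⟩ := aux_exists_full_series hheight
    -- the embedding of submodule lattices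
    have hIle : I ≤ 𝔫 ^ (i + 1) := hv.1.trans (Ideal.pow_le_pow_right hiv)
    set φ : Submodule S Q → Submodule S (S ⧸ I) := fun W =>
      Submodule.map I.mkQ (Submodule.map (𝔫 ^ i).subtype (Submodule.comap K.mkQ W)) with hφ
    -- auxiliary function: preimage in S
    set N : Submodule S Q → Submodule S S := fun W =>
      Submodule.map (𝔫 ^ i).subtype (Submodule.comap K.mkQ W) with hN
    have hNmono : StrictMono N := by
      have h1 : Function.Injective
          (Submodule.comap K.mkQ : Submodule S Q → Submodule S ↥(𝔫 ^ i)) :=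
        Submodule.comap_injective_of_surjective (Submodule.mkQ_surjective K)
      have h2 : Function.Injective (Submodule.map (𝔫 ^ i).subtype) :=
        Submodule.map_injective_of_injective (Submodule.injective_subtype _)
      intro W W' hWW'
      refine lt_of_le_of_ne ?_ ?_
      · exact Submodule.map_mono (Submodule.comap_mono hWW'.le)
      · intro h
        exact hWW'.ne (h1 (h2 h))
    have hNge : ∀ W, 𝔫 ^ (i + 1) ≤ N W := by
      intro W
      have h1 : K ≤ Submodule.comap K.mkQ W := by
        intro x hx
        simp only [Submodule.mem_comap]
        have hx0 : K.mkQ x = 0 := (Submodule.Quotient.mk_eq_zero K).mpr hx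
        rw [hx0]; exact W.zero_mem
      calc 𝔫 ^ (i + 1) = 𝔫 ^ i ⊓ 𝔫 ^ (i + 1) :=
            (inf_eq_right.mpr (Ideal.pow_le_pow_right (Nat.le_succ i))).symm
        _ = Submodule.map (𝔫 ^ i).subtype K := (Submodule.map_comap_subtype _ _).symm
        _ ≤ N W := Submodule.map_mono h1
    have hφmono : StrictMono φ := by
      intro W W' hWW'
      have hN' := hNmono hWW'
      refine lt_of_le_of_ne (Submodule.map_mono hN'.le) ?_
      intro h
      have h1 : Submodule.comap I.mkQ (Submodule.map I.mkQ (N W)) =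
          Submodule.comap I.mkQ (Submodule.map I.mkQ (N W')) := by
        rw [show Submodule.map I.mkQ (N W) = φ W from rfl,
          show Submodule.map I.mkQ (N W') = φ W' from rfl, h]
      rw [Submodule.comap_map_mkQ, Submodule.comap_map_mkQ,
        sup_eq_right.mpr (hIle.trans (hNge W)), sup_eq_right.mpr (hIle.trans (hNge W'))] at h1
      exact hN'.ne h1
    have hφbot : φ ⊥ = M (i + 1) := by
      show Submodule.map I.mkQ (Submodule.map (𝔫 ^ i).subtype (Submodule.comap K.mkQ ⊥)) = _
      rw [Submodule.comap_bot, Submodule.ker_mkQ, hM]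
      rw [show Submodule.map (𝔫 ^ i).subtype K = 𝔫 ^ i ⊓ 𝔫 ^ (i + 1) from
        Submodule.map_comap_subtype _ _,
        inf_eq_right.mpr (Ideal.pow_le_pow_right (Nat.le_succ i))]
    have hφtop : φ ⊤ = M i := by
      show Submodule.map I.mkQ (Submodule.map (𝔫 ^ i).subtype (Submodule.comap K.mkQ ⊤)) = _
      rw [Submodule.comap_top, Submodule.map_top, Submodule.range_subtype, hM]
    refine ⟨p.map φ hφmono, ?_, ?_, ?_⟩
    · rw [LTSeries.head_map, hp_head, hφbot]
    · rw [LTSeries.last_map, hp_last, hφtop]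
    · simpa using hp_len
  -- STEP 2: for i ≤ s, height (M (i+1)) + 1 ≤ height (M i)
  have step2 : ∀ i ≤ s, Order.height (M (i + 1)) + 1 ≤ Order.height (M i) := by
    intro i his
    set mR : Ideal (S ⧸ I) := Ideal.map (Ideal.Quotient.mk I) 𝔫 with hmR
    have hMlt : M (i + 1) < M i := by
      refine lt_of_le_of_ne (Submodule.map_mono (Ideal.pow_le_pow_right (Nat.le_succ i))) ?_
      intro h
      -- then mR ^ (i+1) = mR ^ i, Nakayama gives mR ^ i = ⊥, contradicting i ≤ s
      have heq : mR ^ (i + 1) = mR ^ i := by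
        apply Submodule.restrictScalars_injective S
        rw [← Ideal.map_pow, ← Ideal.map_pow, hrestrict, hrestrict]
        exact h
      have hmRne : mR ≠ ⊤ := by
        intro htop
        have h1 : (1 : S ⧸ I) ∈ mR := htop ▸ Submodule.mem_top
        obtain ⟨x, hx𝔫, hx1⟩ := (Ideal.mem_map_iff_of_surjective _
          Ideal.Quotient.mk_surjective).mp h1
        have : x - 1 ∈ I := by
          rw [← Ideal.Quotient.eq_zero_iff_mem]
          simp [map_sub, hx1]
        have h1𝔫 : (1 : S) ∈ 𝔫 := by
          have := 𝔫.sub_mem hx𝔫 (hI𝔫 this)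
          simpa using this
        exact h𝔫ne (Ideal.eq_top_of_isUnit_mem _ h1𝔫 isUnit_one)
      have hbot : mR ^ i = ⊥ := by
        apply Submodule.eq_bot_of_le_smul_of_le_jacobson_bot mR (mR ^ i)
          (IsNoetherian.noetherian _)
        · rw [Ideal.smul_eq_mul, mul_comm, ← pow_succ, heq]
        · rw [IsLocalRing.jacobson_eq_maximalIdeal ⊥ bot_ne_top]
          exact IsLocalRing.le_maximalIdeal hmRne
      have : mR ^ s = ⊥ := by
        rw [← le_bot_iff, ← hbot]
        exact Ideal.pow_le_pow_right his
      exact hs.1 this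
    rw [ENat.add_one_le_iff (hfin _)]
    exact Order.height_strictMono hMlt (lt_top_iff_ne_top.mpr (hfin _))
  -- combine: height (M k) + Σ_{i<k} hS i ≤ height (M 0)
  have main1 : ∀ k ≤ v,
      Order.height (M k) + (∑ i ∈ Finset.range k, (hS i : ℕ∞)) ≤ Order.height (M 0) := by
    intro k
    induction k with
    | zero => simp
    | succ k ih =>
      intro hkv
      have hk : k < v := hkv
      have h1 := step1 k hk
      have h2 := ih hk.le
      calc Order.height (M (k + 1)) + ∑ i ∈ Finset.range (k + 1), (hS i : ℕ∞)
          = (Order.height (M (k + 1)) + (hS k : ℕ∞)) + ∑ i ∈ Finset.range k, (hS i : ℕ∞) := by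
            rw [Finset.sum_range_succ]; ring
        _ ≤ Order.height (M k) + ∑ i ∈ Finset.range k, (hS i : ℕ∞) := by gcongr
        _ ≤ _ := h2
  have main2 : ∀ j, v + j ≤ s + 1 →
      Order.height (M (v + j)) + (j : ℕ∞) ≤ Order.height (M v) := by
    intro j
    induction j with
    | zero => simp
    | succ j ih =>
      intro hj
      have hjs : v + j ≤ s := by omega
      have h1 := step2 (v + j) hjs
      have h2 := ih (by omega)
      calc Order.height (M (v + (j + 1))) + ((j + 1 : ℕ) : ℕ∞)
          = (Order.height (M (v + j + 1)) + 1) + (j : ℕ∞) := by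
            rw [show v + (j + 1) = v + j + 1 from rfl]; push_cast; ring
        _ ≤ Order.height (M (v + j)) + (j : ℕ∞) := by gcongr
        _ ≤ _ := h2
  -- conclude
  have hM0le : Order.height (M 0) ≤ (ℓ : ℕ∞) := hfin' 0
  have hSumLe : (∑ i ∈ Finset.range v, (hS i : ℕ∞)) ≤ (ℓ : ℕ∞) := by
    calc (∑ i ∈ Finset.range v, (hS i : ℕ∞)) ≤
        Order.height (M v) + ∑ i ∈ Finset.range v, (hS i : ℕ∞) := le_add_self
      _ ≤ Order.height (M 0) := main1 v le_rfl
      _ ≤ (ℓ : ℕ∞) := hM0le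
  have hSumLeN : (∑ i ∈ Finset.range v, hS i) ≤ ℓ := by
    have : ((∑ i ∈ Finset.range v, hS i : ℕ) : ℕ∞) ≤ (ℓ : ℕ∞) := by push_cast at hSumLe ⊢; exact hSumLe
    exact_mod_cast this
  by_cases hsv : v ≤ s
  · -- main case
    have hj := main2 (s + 1 - v) (by omega)
    rw [show v + (s + 1 - v) = s + 1 by omega] at hj
    have hkey : ((s + 1 - v : ℕ) : ℕ∞) + (∑ i ∈ Finset.range v, (hS i : ℕ∞)) ≤ (ℓ : ℕ∞) := by
      calc ((s + 1 - v : ℕ) : ℕ∞) + (∑ i ∈ Finset.range v, (hS i : ℕ∞))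
          ≤ (Order.height (M (s + 1)) + ((s + 1 - v : ℕ) : ℕ∞)) +
            ∑ i ∈ Finset.range v, (hS i : ℕ∞) := by gcongr; exact le_add_self
        _ ≤ Order.height (M v) + ∑ i ∈ Finset.range v, (hS i : ℕ∞) := by gcongr
        _ ≤ Order.height (M 0) := main1 v le_rfl
        _ ≤ (ℓ : ℕ∞) := hM0le
    have hkeyN : (s + 1 - v) + (∑ i ∈ Finset.range v, hS i) ≤ ℓ := by
      have : (((s + 1 - v) + ∑ i ∈ Finset.range v, hS i : ℕ) : ℕ∞) ≤ (ℓ : ℕ∞) := by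
        push_cast at hkey ⊢; exact hkey
      exact_mod_cast this
    have : (∑ i ∈ Finset.range v, (hS i : ℤ)) = ((∑ i ∈ Finset.range v, hS i : ℕ) : ℤ) := by
      push_cast; ring
    rw [this]
    omega
  · -- case s < v
    have : (∑ i ∈ Finset.range v, (hS i : ℤ)) = ((∑ i ∈ Finset.range v, hS i : ℕ) : ℤ) := by
      push_cast; ring
    rw [this]
    omega
end

section
/- Let (S, 𝔫) be a commutative Noetherian local ring and I an 𝔫-primary ideal with v_S(I) ≥ 2 which is not a power of 𝔫; write R = S/I with maximal ideal 𝔪 = 𝔫/I. Then s(R) = ℓ_S(R) − edim(R) if and only if R is a stretched Artinian local ring (i.e. 𝔪² is a principal ideal). In this case, v_S(I) = 2 and μ_R(𝔪²) = 1. -/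
open IsLocalRing

section Generic

variable {R M N : Type*} [Ring R] [AddCommGroup M] [Module R M] [AddCommGroup N] [Module R N]

lemma moduleLength_congr (e : M ≃ₗ[R] N) : moduleLength R M = moduleLength R N :=
  Order.krullDim_eq_of_orderIso (Submodule.orderIsoMapComap e)

lemma moduleLength_nonneg : 0 ≤ moduleLength R M := Order.krullDim_nonneg

lemma moduleLength_eq_zero [Subsingleton M] : moduleLength R M = 0 := by
  haveI : Subsingleton (Submodule R M) := by
    constructor
    intro a b
    ext x
    have : x = 0 := Subsingleton.elim x 0
    simp [this]
  exact le_antisymm Order.krullDim_nonpos_of_subsingleton moduleLength_nonneg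

lemma one_le_moduleLength [Nontrivial M] : 1 ≤ moduleLength R M := by
  have h : (⊥ : Submodule R M) < ⊤ := bot_lt_top
  have := Order.LTSeries.length_le_krullDim ((RelSeries.singleton (α := Submodule R M) {(a, b) : Submodule R M × Submodule R M | a < b} ⊥).snoc ⊤ (by simpa using h))
  simpa [moduleLength] using this

private lemma height_succ_le {α : Type*} [Preorder α] {x y : α} (h : x < y) :
    Order.height x + 1 ≤ Order.height y := by
  rw [Order.height_eq_iSup_lt_height y]
  exact le_iSup₂ (f := fun z (_ : z < y) => Order.height z + 1) x h

private lemma length_le_height_add_height {A B : Type*} [Preorder A] [Preorder B]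
    (p : LTSeries (A × B)) :
    (p.length : ℕ∞) ≤ Order.height p.last.1 + Order.height p.last.2 := by
  suffices H : ∀ (n : ℕ) (p : LTSeries (A × B)), p.length = n →
      (p.length : ℕ∞) ≤ Order.height p.last.1 + Order.height p.last.2 from H p.length p rfl
  intro n
  induction n with
  | zero => intro p hn; rw [hn]; simp
  | succ n ih =>
    intro p hn
    have h0 : p.length ≠ 0 := by omega
    have hlt : p.eraseLast.last < p.last := p.eraseLast_last_rel_last h0
    have hlen : p.eraseLast.length = n := by simp [hn]
    have H := ih p.eraseLast hlen
    rw [hlen] at H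
    rw [hn]
    have cast1 : ((n + 1 : ℕ) : ℕ∞) = (n : ℕ∞) + 1 := by push_cast; ring
    rw [cast1]
    rcases Prod.lt_iff.mp hlt with ⟨h1, h2⟩ | ⟨h1, h2⟩
    · calc (n : ℕ∞) + 1 ≤ (Order.height p.eraseLast.last.1 + Order.height p.eraseLast.last.2) + 1 :=
          add_le_add_left H 1
        _ = (Order.height p.eraseLast.last.1 + 1) + Order.height p.eraseLast.last.2 := by
          rw [add_right_comm]
        _ ≤ Order.height p.last.1 + Order.height p.last.2 :=
          add_le_add (height_succ_le h1) (Order.height_mono h2)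
    · calc (n : ℕ∞) + 1 ≤ (Order.height p.eraseLast.last.1 + Order.height p.eraseLast.last.2) + 1 :=
          add_le_add_left H 1
        _ = Order.height p.eraseLast.last.1 + (Order.height p.eraseLast.last.2 + 1) := by
          rw [add_assoc]
        _ ≤ Order.height p.last.1 + Order.height p.last.2 :=
          add_le_add (Order.height_mono h1) (height_succ_le h2)

lemma moduleLength_eq_add (P : Submodule R M) :
    moduleLength R M = moduleLength R P + moduleLength R (M ⧸ P) := by
  haveI : Nonempty (LTSeries (Submodule R M)) := ⟨RelSeries.singleton _ ⊥⟩
  haveI : Nonempty (LTSeries (Submodule R P)) := ⟨RelSeries.singleton _ ⊥⟩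
  haveI : Nonempty (LTSeries (Submodule R (M ⧸ P))) := ⟨RelSeries.singleton _ ⊥⟩
  apply le_antisymm
  · -- define the strictly monotone pair map
    have hf : StrictMono (fun q : Submodule R M =>
        ((Submodule.comap P.subtype q : Submodule R P),
         (Submodule.map P.mkQ q : Submodule R (M ⧸ P)))) := by
      intro a b hab
      have hp := strictMono_inf_prod_sup (z := P) hab
      rw [Prod.lt_iff] at hp ⊢
      rcases hp with ⟨h1, _⟩ | ⟨_, h2⟩
      · left
        constructor
        · refine lt_of_le_of_ne (Submodule.comap_mono hab.le) ?_
          intro he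
          have := congrArg (Submodule.map P.subtype) he
          rw [Submodule.map_comap_subtype, Submodule.map_comap_subtype] at this
          rw [inf_comm P a, inf_comm P b] at this
          exact h1.ne this
        · exact Submodule.map_mono hab.le
      · right
        constructor
        · exact Submodule.comap_mono hab.le
        · refine lt_of_le_of_ne (Submodule.map_mono hab.le) ?_
          intro he
          have := congrArg (Submodule.comap P.mkQ) he
          rw [Submodule.comap_map_mkQ, Submodule.comap_map_mkQ] at this
          rw [sup_comm P a, sup_comm P b] at this
          exact h2.ne this
    rw [moduleLength, moduleLength, moduleLength, Order.krullDim_eq_iSup_length,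
      ← Order.height_top_eq_krullDim, ← Order.height_top_eq_krullDim, ← WithBot.coe_add,
      WithBot.coe_le_coe]
    apply iSup_le
    intro r
    have := length_le_height_add_height (r.map _ hf)
    have hl : (r.map _ hf).length = r.length := rfl
    rw [hl] at this
    refine this.trans (add_le_add (Order.height_mono le_top) (Order.height_mono le_top))
  · rw [moduleLength, moduleLength, moduleLength, Order.krullDim_eq_iSup_length,
      Order.krullDim_eq_iSup_length, Order.krullDim_eq_iSup_length, ← WithBot.coe_add,
      WithBot.coe_le_coe, ENat.iSup_add]
    apply iSup_le
    intro p
    rw [ENat.add_iSup]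
    apply iSup_le
    intro q
    -- lift the two series into Submodule R M and glue them at P
    have hmap1 : StrictMono (fun t : Submodule R P => Submodule.map P.subtype t) := by
      intro a b hab
      exact lt_of_le_of_ne (Submodule.map_mono hab.le)
        (fun he => hab.ne (Submodule.map_injective_of_injective P.injective_subtype he))
    have hmap2 : StrictMono (fun t : Submodule R (M ⧸ P) => Submodule.comap P.mkQ t) := by
      intro a b hab
      exact lt_of_le_of_ne (Submodule.comap_mono hab.le)
        (fun he => hab.ne (Submodule.comap_injective_of_surjective P.mkQ_surjective he))
    set p' : LTSeries (Submodule R M) := p.map _ hmap1 with hp'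
    set q' : LTSeries (Submodule R M) := q.map _ hmap2 with hq'
    have hple : p'.last ≤ P := Submodule.map_subtype_le P p.last
    have hqge : P ≤ q'.head := by
      show P ≤ Submodule.comap P.mkQ q.head
      conv_lhs => rw [← Submodule.ker_mkQ P]
      rw [LinearMap.ker]
      exact Submodule.comap_mono bot_le
    have hlen1 : p'.length = p.length := rfl
    have hlen2 : q'.length = q.length := rfl
    obtain ⟨r, hr⟩ : ∃ r : LTSeries (Submodule R M), p'.length + q'.length ≤ r.length := by
      rcases eq_or_lt_of_le hple with h | h
      · rcases eq_or_lt_of_le hqge with h' | h'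
        · exact ⟨p'.smash q' (h.trans h'), by simp [RelSeries.smash_length]⟩
        · exact ⟨p'.smash (q'.cons P h') (by rw [RelSeries.head_cons]; exact h), by simp [RelSeries.smash_length, RelSeries.cons_length] <;> omega⟩
      · rcases eq_or_lt_of_le hqge with h' | h'
        · exact ⟨(p'.snoc P h).smash q' (by simp [h']), by simp [RelSeries.smash_length] <;> omega⟩
        · exact ⟨(p'.snoc P h).smash (q'.cons P h') (by rw [RelSeries.head_cons, RelSeries.last_snoc]), by simp [RelSeries.smash_length, RelSeries.cons_length] <;> omega⟩
    rw [hlen1, hlen2] at hr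
    refine le_trans ?_ (le_iSup (fun r : LTSeries (Submodule R M) => (r.length : ℕ∞)) r)
    exact_mod_cast hr

end Generic
section Cyclic

private lemma subsingleton_submodule {R M : Type*} [Ring R] [AddCommGroup M] [Module R M]
    [Subsingleton M] : Subsingleton (Submodule R M) := by
  constructor
  intro a b
  ext x
  have : x = 0 := Subsingleton.elim x 0
  simp [this]

variable {R : Type*} [CommRing R] [IsLocalRing R] {M : Type*} [AddCommGroup M] [Module R M]

lemma moduleLength_le_one_of_cyclic (x : M) (hgen : Submodule.span R {x} = ⊤)
    (hkill : ∀ a ∈ maximalIdeal R, ∀ y : M, a • y = 0) : moduleLength R M ≤ 1 := by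
  have hcls : ∀ p : Submodule R M, p = ⊥ ∨ p = ⊤ := by
    intro p
    rcases eq_or_ne p ⊥ with h | h
    · exact .inl h
    · right
      obtain ⟨y, hyp, hy0⟩ := Submodule.exists_mem_ne_zero_of_ne_bot h
      have hyx : y ∈ Submodule.span R {x} := hgen ▸ Submodule.mem_top
      obtain ⟨c, rfl⟩ := Submodule.mem_span_singleton.mp hyx
      have hc : IsUnit c := by
        by_contra hc
        exact hy0 (hkill c ((IsLocalRing.mem_maximalIdeal c).mpr hc) x)
      rw [eq_top_iff, ← hgen, Submodule.span_le, Set.singleton_subset_iff]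
      obtain ⟨u, rfl⟩ := hc
      have hin : ((u⁻¹ : Rˣ) : R) • ((u : R) • x) ∈ p := Submodule.smul_mem _ _ hyp
      simpa [smul_smul] using hin
  have hlen : ∀ r : LTSeries (Submodule R M), r.length ≤ 1 := by
    intro r
    by_contra hr
    push_neg at hr
    have h2 : 2 ≤ r.length := hr
    have l01 : r.toFun ⟨0, by omega⟩ < r.toFun ⟨1, by omega⟩ :=
      r.strictMono (by rw [Fin.mk_lt_mk]; omega)
    have l12 : r.toFun ⟨1, by omega⟩ < r.toFun ⟨2, by omega⟩ :=
      r.strictMono (by rw [Fin.mk_lt_mk]; omega)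
    rcases hcls (r.toFun ⟨1, by omega⟩) with h | h
    · rw [h] at l01; exact not_lt_bot l01
    · rw [h] at l12; exact not_top_lt l12
  rw [moduleLength, Order.krullDim_eq_iSup_length]
  have hsup : (⨆ r : LTSeries (Submodule R M), (r.length : ℕ∞)) ≤ (1 : ℕ∞) :=
    iSup_le fun r => by exact_mod_cast hlen r
  exact_mod_cast hsup

lemma exists_span_eq_top_of_moduleLength_le_one {R M : Type*} [Ring R] [AddCommGroup M]
    [Module R M] (h : moduleLength R M ≤ 1) : ∃ x : M, Submodule.span R {x} = ⊤ := by
  by_cases hs : Subsingleton M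
  · haveI := hs
    haveI := subsingleton_submodule (R := R) (M := M)
    exact ⟨0, Subsingleton.elim _ _⟩
  · haveI : Nontrivial M := not_subsingleton_iff_nontrivial.mp hs
    obtain ⟨y, hy⟩ := exists_ne (0 : M)
    refine ⟨y, ?_⟩
    by_contra hne
    have h1 : (⊥ : Submodule R M) < Submodule.span R {y} := by
      rw [bot_lt_iff_ne_bot, ne_eq, Submodule.span_singleton_eq_bot]
      exact hy
    have h2 : Submodule.span R {y} < ⊤ := lt_top_iff_ne_top.mpr hne
    have hch := Order.LTSeries.length_le_krullDim
      (((RelSeries.singleton (α := Submodule R M) {(a, b) : Submodule R M × Submodule R M | a < b} ⊥).snoc _ h1).snoc ⊤ (by exact h2))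
    have : ((2 : ℕ) : WithBot ℕ∞) ≤ moduleLength R M := hch
    have h21 : ((2 : ℕ) : WithBot ℕ∞) ≤ ((1 : ℕ) : WithBot ℕ∞) := by
      refine le_trans this (le_trans h ?_)
      norm_num
    have : (2 : ℕ) ≤ 1 := by exact_mod_cast h21
    omega

lemma nak_le {R : Type*} [CommRing R] [IsLocalRing R] {M : Type*} [AddCommGroup M] [Module R M]
    {N K : Submodule R M} (hfg : N.FG) (h : N ≤ K ⊔ (maximalIdeal R) • N) : N ≤ K :=
  Submodule.le_of_le_smul_of_le_jacobson_bot hfg (IsLocalRing.maximalIdeal_le_jacobson ⊥) h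

end Cyclic

section Powers

variable {A : Type*} [CommRing A] [IsLocalRing A] [IsNoetherianRing A]

lemma cube_principal_of_sq_principal {y : A}
    (h2 : maximalIdeal A ^ 2 = Ideal.span {y}) : ∃ z : A, maximalIdeal A ^ 3 = Ideal.span {z} := by
  set m := maximalIdeal A with hm
  by_cases hc : m ^ 2 ≤ m ^ 3
  · have h32 : m ^ 3 ≤ m ^ 2 := Ideal.pow_le_pow_right (by omega)
    have hbot : m ^ 2 = ⊥ := by
      apply Submodule.eq_bot_of_le_smul_of_le_jacobson_bot m (m ^ 2)
      · exact IsNoetherian.noetherian _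
      · calc m ^ 2 ≤ m ^ 3 := hc
          _ = m • m ^ 2 := by rw [Ideal.smul_eq_mul, ← pow_succ']
      · exact IsLocalRing.maximalIdeal_le_jacobson ⊥
    refine ⟨0, ?_⟩
    rw [Set.singleton_zero, Ideal.span_zero]
    exact le_bot_iff.mp (le_trans h32 hbot.le)
  · have hmm : ¬ (m * m ≤ m ^ 3) := by rwa [← pow_two]
    rw [Ideal.mul_le] at hmm
    push_neg at hmm
    obtain ⟨g, hg, h, hh, hgh⟩ := hmm
    have hghm2 : g * h ∈ m ^ 2 := by
      rw [pow_two]; exact Ideal.mul_mem_mul hg hh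
    obtain ⟨u, hu⟩ := Ideal.mem_span_singleton'.mp (h2 ▸ hghm2)
    have humem : u ∉ m := by
      intro hum
      apply hgh
      have : u * y ∈ m * m ^ 2 := Ideal.mul_mem_mul hum (h2 ▸ Ideal.mem_span_singleton_self y)
      rw [← pow_succ'] at this
      rwa [hu] at this
    have hunit : IsUnit u := by
      by_contra hun
      exact humem ((IsLocalRing.mem_maximalIdeal u).mpr hun)
    obtain ⟨U, hU⟩ := hunit
    refine ⟨g * y, ?_⟩
    have key : ∀ s ∈ m, s * y ∈ Ideal.span {g * y} := by
      intro s hs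
      have hshm2 : s * h ∈ m ^ 2 := by rw [pow_two]; exact Ideal.mul_mem_mul hs hh
      obtain ⟨b, hb⟩ := Ideal.mem_span_singleton'.mp (h2 ▸ hshm2)
      have hUu : (↑U⁻¹ : A) * u = 1 := by rw [← hU]; exact U.inv_mul
      rw [Ideal.mem_span_singleton']
      refine ⟨(↑U⁻¹ : A) * b, ?_⟩
      linear_combination (↑U⁻¹ : A) * g * hb - (↑U⁻¹ : A) * s * hu + s * y * hUu
    apply le_antisymm
    · have h3 : m ^ 3 = Ideal.span {y} * m := by rw [← h2, ← pow_succ]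
      rw [h3, Ideal.mul_le]
      intro r hr s hs
      obtain ⟨a, ha⟩ := Ideal.mem_span_singleton'.mp hr
      have : r * s = a * (s * y) := by linear_combination s * ha.symm
      rw [this]
      exact Ideal.mul_mem_left _ a (key s hs)
    · rw [Ideal.span_le, Set.singleton_subset_iff]
      have : g * y ∈ m * m ^ 2 := Ideal.mul_mem_mul hg (h2 ▸ Ideal.mem_span_singleton_self y)
      rwa [← pow_succ'] at this

lemma pow_principal_of_sq_principal {y : A}
    (h2 : maximalIdeal A ^ 2 = Ideal.span {y}) :
    ∀ i : ℕ, 2 ≤ i → ∃ z : A, maximalIdeal A ^ i = Ideal.span {z} := by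
  obtain ⟨z3, hz3⟩ := cube_principal_of_sq_principal h2
  intro i
  induction i using Nat.strong_induction_on with
  | _ i ih =>
    intro hi
    rcases Nat.lt_or_ge i 4 with h4 | h4
    · interval_cases i
      · exact ⟨y, h2⟩
      · exact ⟨z3, hz3⟩
    · obtain ⟨w, hw⟩ := ih (i - 2) (by omega) (by omega)
      refine ⟨w * y, ?_⟩
      have : maximalIdeal A ^ i = maximalIdeal A ^ (i - 2) * maximalIdeal A ^ 2 := by
        rw [← pow_add]
        congr 1
        omega
      rw [this, hw, h2, Ideal.span_singleton_mul_span_singleton]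

end Powers
/-- Let `(S, 𝔫)` be a Noetherian local ring and `I` an `𝔫`-primary ideal
with `v_S(I) ≥ 2` which is not a power of `𝔫`; let `R = S ⧸ I` with maximal ideal
`𝔪 = 𝔫/I`, `ℓ = ℓ_S(R)`, `e = edim R`, and `s` the top socle degree of `R`.
Then `s = ℓ − e` iff `R` is stretched (i.e. `𝔪²` is principal); and in this case
`v_S(I) = 2` and `μ_R(𝔪²) = 1`. -/
theorem top_socle_degree_eq_iff_stretched
    (S : Type*) [CommRing S] [IsNoetherianRing S] [IsLocalRing S]
    (I : Ideal S) (hprim : I.radical = maximalIdeal S)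
    (hnotpow : ∀ n : ℕ, I ≠ maximalIdeal S ^ n)
    (v : ℕ) (hv : IsGreatest {n : ℕ | I ≤ maximalIdeal S ^ n} v) (hv2 : 2 ≤ v)
    (ℓ : ℕ) (hℓ : moduleLength S (S ⧸ I) = (ℓ : ℕ∞))
    (e : ℕ)
    (he : moduleLength S
        (↥(maximalIdeal S) ⧸
          Submodule.comap (maximalIdeal S).subtype (maximalIdeal S ^ 2 ⊔ I)) =
        ((e : ℕ∞) : WithBot ℕ∞))
    (s : ℕ)
    (hs : IsGreatest {n : ℕ |
        ((maximalIdeal S).map (Ideal.Quotient.mk I)) ^ n ≠ ⊥} s) :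
    (((s : ℤ) = (ℓ : ℤ) - e) ↔
      (((maximalIdeal S).map (Ideal.Quotient.mk I)) ^ 2).IsPrincipal) ∧
    ((s : ℤ) = (ℓ : ℤ) - e →
      v = 2 ∧
      ((∃ x : S ⧸ I, ((maximalIdeal S).map (Ideal.Quotient.mk I)) ^ 2 = Ideal.span {x}) ∧
        ((maximalIdeal S).map (Ideal.Quotient.mk I)) ^ 2 ≠ ⊥)) := by
  classical
  have hmksurj : Function.Surjective (Ideal.Quotient.mk I) := Ideal.Quotient.mk_surjective
  set 𝔫 : Ideal S := maximalIdeal S with h𝔫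
  set m : Ideal (S ⧸ I) := 𝔫.map (Ideal.Quotient.mk I) with hmdef
  have hIv : I ≤ 𝔫 ^ v := hv.1
  have hI2 : I ≤ 𝔫 ^ 2 := le_trans hIv (Ideal.pow_le_pow_right hv2)
  have hI1 : I ≤ 𝔫 := le_trans hI2 (by rw [pow_two]; exact Ideal.mul_le_left)
  have h𝔫top : 𝔫 ≠ ⊤ := (IsLocalRing.maximalIdeal.isMaximal S).ne_top
  have hInetop : I ≠ ⊤ := fun h => h𝔫top (top_le_iff.mp (h ▸ hI1))
  haveI : Nontrivial (S ⧸ I) := Ideal.Quotient.nontrivial_iff.mpr hInetop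
  haveI : IsLocalRing (S ⧸ I) := IsLocalRing.of_surjective' (Ideal.Quotient.mk I) hmksurj
  have hmpow : ∀ i : ℕ, m ^ i = (𝔫 ^ i).map (Ideal.Quotient.mk I) := by
    intro i
    rw [Ideal.map_pow]
  have hcomapmap : ∀ J : Ideal S,
      (J.map (Ideal.Quotient.mk I)).comap (Ideal.Quotient.mk I) = J ⊔ I := by
    intro J
    rw [Ideal.comap_map_of_surjective _ hmksurj]
    congr 1
    rw [← RingHom.ker_eq_comap_bot, Ideal.mk_ker]
  have hmember : ∀ (x : S ⧸ I) (i : ℕ),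
      x ∈ m ^ i ↔ ∃ a, a ∈ 𝔫 ^ i ∧ Ideal.Quotient.mk I a = x := by
    intro x i
    rw [hmpow i, Ideal.mem_map_iff_of_surjective _ hmksurj]
  have hsmul_eq : ∀ (a : S) (y : S ⧸ I), a • y = Ideal.Quotient.mk I a * y := by
    intro a y
    obtain ⟨b, rfl⟩ := hmksurj y
    rw [← map_mul]
    exact (Submodule.Quotient.mk_smul I a b).symm
  have hm2ne : m ^ 2 ≠ ⊥ := by
    intro hbot
    rw [hmpow 2] at hbot
    have hle : 𝔫 ^ 2 ≤ I := by
      have := (Ideal.map_eq_bot_iff_le_ker _).mp hbot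
      rwa [Ideal.mk_ker] at this
    exact hnotpow 2 (le_antisymm hI2 hle)
  have hs2 : 2 ≤ s := hs.2 hm2ne
  have hmsbot : m ^ (s + 1) = ⊥ := by
    by_contra h
    have := hs.2 h
    omega
  have hmaxeq : maximalIdeal (S ⧸ I) = m := by
    ext x
    obtain ⟨a, rfl⟩ := hmksurj x
    constructor
    · intro hx
      by_cases ha : a ∈ 𝔫
      · exact Ideal.mem_map_of_mem _ ha
      · exfalso
        have hu : IsUnit a := by
          by_contra hna
          exact ha ((IsLocalRing.mem_maximalIdeal a).mpr hna)
        exact (IsLocalRing.mem_maximalIdeal _).mp hx (hu.map (Ideal.Quotient.mk I))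
    · intro hx
      obtain ⟨a', ha', hmk⟩ := (hmember _ 1).mp (by rwa [pow_one])
      rw [pow_one] at ha'
      rw [IsLocalRing.mem_maximalIdeal]
      intro hu
      rw [← hmk] at hu
      obtain ⟨b, hb⟩ := hu.exists_right_inv
      obtain ⟨c, rfl⟩ := hmksurj b
      rw [← map_mul, ← map_one (Ideal.Quotient.mk I), Ideal.Quotient.eq] at hb
      have hab : a' * c ∈ 𝔫 := Ideal.mul_mem_right _ _ ha'
      have hsub : a' * c - 1 ∈ 𝔫 := hI1 hb
      have h1 : (1 : S) ∈ 𝔫 := by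
        have := Submodule.sub_mem _ hab hsub
        simpa using this
      exact h𝔫top ((Ideal.eq_top_iff_one 𝔫).mpr h1)
  have hfg : ∀ P : Submodule S (S ⧸ I), P.FG := fun P => IsNoetherian.noetherian P
  set N : ℕ → Submodule S (S ⧸ I) := fun i => (m ^ i).restrictScalars S with hN
  have hNmem : ∀ (i : ℕ) (x : S ⧸ I), x ∈ N i ↔ x ∈ m ^ i := fun i x => Iff.rfl
  have hNle : ∀ i, N (i + 1) ≤ N i := by
    intro i x hx
    exact (Ideal.pow_le_pow_right (Nat.le_succ i)) hx
  have hsmulN : ∀ i, 𝔫 • N i = N (i + 1) := by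
    intro i
    apply le_antisymm
    · refine Submodule.smul_le.mpr ?_
      intro a ha x hx
      rw [hNmem, hsmul_eq]
      have hmm : Ideal.Quotient.mk I a * x ∈ m * m ^ i :=
        Ideal.mul_mem_mul (Ideal.mem_map_of_mem _ ha) hx
      rwa [← pow_succ'] at hmm
    · intro z hz
      have hz' : z ∈ m * m ^ i := by
        rw [← pow_succ']
        exact hz
      refine Submodule.mul_induction_on hz' ?_ ?_
      · intro x hxm y hy
        obtain ⟨a, ha, hax⟩ := (hmember x 1).mp (by rwa [pow_one])
        rw [pow_one] at ha
        rw [← hax, ← hsmul_eq]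
        exact Submodule.smul_mem_smul ha hy
      · intro x y hx hy
        exact Submodule.add_mem _ hx hy
  set d : ℕ → WithBot ℕ∞ := fun i =>
    moduleLength S (↥(N i) ⧸ Submodule.comap (N i).subtype (N (i + 1))) with hd
  set L : ℕ → WithBot ℕ∞ := fun i => moduleLength S ↥(N i) with hL
  have hLrec : ∀ i, L i = L (i + 1) + d i := by
    intro i
    have h1 := moduleLength_eq_add (R := S) (M := ↥(N i))
      (Submodule.comap (N i).subtype (N (i + 1)))
    have h2 := moduleLength_congr (R := S) (M := ↥(Submodule.comap (N i).subtype (N (i + 1))))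
      (N := ↥(N (i + 1))) (by exact Submodule.comapSubtypeEquivOfLe (hNle i))
    rw [h2] at h1
    exact h1
  have hL0 : L 0 = ((ℓ : ℕ∞) : WithBot ℕ∞) := by
    have hN0 : N 0 = ⊤ := by
      show (m ^ 0).restrictScalars S = ⊤
      rw [pow_zero, Ideal.one_eq_top]
      rfl
    show moduleLength S ↥(N 0) = _
    rw [hN0, moduleLength_congr (Submodule.topEquiv (R := S) (M := S ⧸ I))]
    exact hℓ
  have hLtop : L (s + 1) = 0 := by
    have hNs : N (s + 1) = ⊥ := by
      show (m ^ (s + 1)).restrictScalars S = ⊥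
      rw [hmsbot]
      rfl
    show moduleLength S ↥(N (s + 1)) = 0
    rw [hNs]
    exact moduleLength_eq_zero
  have hd_ge : ∀ i, i ≤ s → (1 : WithBot ℕ∞) ≤ d i := by
    intro i hi
    have hne : N i ≠ N (i + 1) := by
      intro heq
      have hle : N i ≤ 𝔫 • N i := by
        rw [hsmulN i]
        exact heq.le
      have hbot := Submodule.eq_bot_of_le_smul_of_le_jacobson_bot 𝔫 (N i) (hfg _) hle
        (IsLocalRing.maximalIdeal_le_jacobson ⊥)
      have hmi : m ^ i = ⊥ := by
        apply Submodule.restrictScalars_injective S (S ⧸ I) (S ⧸ I)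
        rw [Submodule.restrictScalars_bot]
        exact hbot
      have hms : m ^ s = ⊥ :=
        le_bot_iff.mp (le_trans (Ideal.pow_le_pow_right hi) hmi.le)
      exact hs.1 hms
    have hlt : Submodule.comap (N i).subtype (N (i + 1)) < ⊤ := by
      rw [lt_top_iff_ne_top]
      intro htop
      exact hne (le_antisymm (Submodule.comap_subtype_eq_top.mp htop) (hNle i))
    haveI := Submodule.Quotient.nontrivial_iff.mpr hlt.ne
    exact one_le_moduleLength
  have hd_le : ∀ (x : S ⧸ I), m ^ 2 = Ideal.span {x} → ∀ i, 2 ≤ i → d i ≤ 1 := by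
    intro x hx i hi
    obtain ⟨z, hz⟩ := pow_principal_of_sq_principal (A := S ⧸ I) (y := x)
      (by rw [hmaxeq]; exact hx) i hi
    rw [hmaxeq] at hz
    have hzmem : z ∈ N i := by
      rw [hNmem, hz]
      exact Ideal.mem_span_singleton_self z
    show moduleLength S _ ≤ 1
    apply moduleLength_le_one_of_cyclic (Submodule.Quotient.mk ⟨z, hzmem⟩)
    · rw [eq_top_iff]
      intro q _
      obtain ⟨w, rfl⟩ := Submodule.Quotient.mk_surjective _ q
      have hw : (w : S ⧸ I) ∈ Ideal.span {z} := by
        rw [← hz]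
        exact w.2
      obtain ⟨cq, hcq⟩ := Ideal.mem_span_singleton'.mp hw
      obtain ⟨c, rfl⟩ := hmksurj cq
      rw [Submodule.mem_span_singleton]
      refine ⟨c, ?_⟩
      rw [← Submodule.Quotient.mk_smul]
      congr 1
      apply Subtype.ext
      show c • z = (w : S ⧸ I)
      rw [hsmul_eq]
      exact hcq
    · intro a ha q
      obtain ⟨w, rfl⟩ := Submodule.Quotient.mk_surjective _ q
      rw [← Submodule.Quotient.mk_smul, Submodule.Quotient.mk_eq_zero, Submodule.mem_comap]
      show a • (w : S ⧸ I) ∈ N (i + 1)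
      rw [hNmem, hsmul_eq]
      have hmm : Ideal.Quotient.mk I a * (w : S ⧸ I) ∈ m * m ^ i :=
        Ideal.mul_mem_mul (Ideal.mem_map_of_mem _ ha) w.2
      rwa [← pow_succ'] at hmm
  have hd0 : d 0 = 1 := by
    refine le_antisymm ?_ (hd_ge 0 (by omega))
    have h1mem : (1 : S ⧸ I) ∈ N 0 := by
      rw [hNmem, pow_zero, Ideal.one_eq_top]
      exact Submodule.mem_top
    show moduleLength S _ ≤ 1
    apply moduleLength_le_one_of_cyclic (Submodule.Quotient.mk ⟨(1 : S ⧸ I), h1mem⟩)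
    · rw [eq_top_iff]
      intro q _
      obtain ⟨w, rfl⟩ := Submodule.Quotient.mk_surjective _ q
      obtain ⟨b, hb⟩ := hmksurj (w : S ⧸ I)
      rw [Submodule.mem_span_singleton]
      refine ⟨b, ?_⟩
      rw [← Submodule.Quotient.mk_smul]
      congr 1
      apply Subtype.ext
      show b • (1 : S ⧸ I) = (w : S ⧸ I)
      rw [hsmul_eq, mul_one]
      exact hb
    · intro a ha q
      obtain ⟨w, rfl⟩ := Submodule.Quotient.mk_surjective _ q
      rw [← Submodule.Quotient.mk_smul, Submodule.Quotient.mk_eq_zero, Submodule.mem_comap]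
      show a • (w : S ⧸ I) ∈ N (0 + 1)
      rw [hNmem, hsmul_eq, pow_one]
      exact Ideal.mul_mem_right _ _ (Ideal.mem_map_of_mem _ ha)
  have hd1 : d 1 = ((e : ℕ∞) : WithBot ℕ∞) := by
    rw [← he]
    have hsub : ∀ x : ↥𝔫, ((I : Submodule S S).mkQ.comp 𝔫.subtype) x ∈ N 1 := by
      intro x
      rw [hNmem, pow_one]
      show Submodule.Quotient.mk x.1 ∈ m
      rw [Ideal.Quotient.mk_eq_mk]
      exact Ideal.mem_map_of_mem _ x.2
    set K : Submodule S ↥(N 1) := Submodule.comap (N 1).subtype (N 2) with hK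
    set f₀ : ↥𝔫 →ₗ[S] ↥(N 1) :=
      LinearMap.codRestrict (N 1) ((I : Submodule S S).mkQ.comp 𝔫.subtype) hsub with hf₀
    set φ : ↥𝔫 →ₗ[S] (↥(N 1) ⧸ K) := K.mkQ.comp f₀ with hφ
    have hφsurj : Function.Surjective φ := by
      intro q
      obtain ⟨w, rfl⟩ := Submodule.Quotient.mk_surjective _ q
      have hw : (w : S ⧸ I) ∈ m ^ 1 := w.2
      obtain ⟨a, ha, hak⟩ := (hmember _ 1).mp hw
      rw [pow_one] at ha
      refine ⟨⟨a, ha⟩, ?_⟩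
      show K.mkQ (f₀ ⟨a, ha⟩) = Submodule.Quotient.mk w
      rw [Submodule.mkQ_apply]
      congr 1
      apply Subtype.ext
      show Submodule.Quotient.mk a = (w : S ⧸ I)
      rw [Ideal.Quotient.mk_eq_mk]
      exact hak
    have hφker : LinearMap.ker φ = Submodule.comap 𝔫.subtype (𝔫 ^ 2 ⊔ I) := by
      ext x
      rw [LinearMap.mem_ker, Submodule.mem_comap]
      have hlhs : φ x = 0 ↔ Ideal.Quotient.mk I x.1 ∈ m ^ 2 := by
        show K.mkQ (f₀ x) = 0 ↔ _
        rw [Submodule.mkQ_apply, Submodule.Quotient.mk_eq_zero, hK, Submodule.mem_comap]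
        show Submodule.Quotient.mk x.1 ∈ N 2 ↔ _
        rw [hNmem, Ideal.Quotient.mk_eq_mk]
      rw [hlhs, hmpow 2, ← Ideal.mem_comap, hcomapmap (𝔫 ^ 2)]
      exact Iff.rfl
    have equiv := LinearMap.quotKerEquivOfSurjective φ hφsurj
    rw [hφker] at equiv
    exact (moduleLength_congr equiv).symm
  -- direction: principal implies the length equation
  have main_of_principal : ∀ x : S ⧸ I, m ^ 2 = Ideal.span {x} → (s : ℤ) = (ℓ : ℤ) - e := by
    intro x hx
    have hde : ∀ i, 2 ≤ i → i ≤ s → d i = 1 := fun i h2 hsle =>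
      le_antisymm (hd_le x hx i h2) (hd_ge i hsle)
    have hLs : ∀ t, t ≤ s - 1 → L (s + 1 - t) = ((t : ℕ∞) : WithBot ℕ∞) := by
      intro t
      induction t with
      | zero =>
        intro _
        simpa using hLtop
      | succ t ih =>
        intro ht
        have h1 : s + 1 - (t + 1) = s - t := by omega
        have h2 : (s - t) + 1 = s + 1 - t := by omega
        rw [h1, hLrec (s - t), h2, ih (by omega), hde (s - t) (by omega) (by omega)]
        push_cast
        rfl
    have hL2 : L 2 = (((s - 1 : ℕ) : ℕ∞) : WithBot ℕ∞) := by
      have h := hLs (s - 1) (le_refl _)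
      rw [show s + 1 - (s - 1) = 2 from by omega] at h
      exact h
    have hfinal : ((ℓ : ℕ∞) : WithBot ℕ∞) =
        (((s - 1 + e + 1 : ℕ) : ℕ∞) : WithBot ℕ∞) := by
      rw [← hL0, hLrec 0, hLrec 1, hL2, hd0, hd1]
      push_cast
      ring
    have hnat : ℓ = s - 1 + e + 1 := by exact_mod_cast hfinal
    omega
  have principal_of_main : (s : ℤ) = (ℓ : ℤ) - e → ∃ x : S ⧸ I, m ^ 2 = Ideal.span {x} := by
    intro hseq
    have hℓe : ℓ = e + s := by omega
    by_contra hnp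
    have hd2 : ¬ d 2 ≤ 1 := by
      intro hle
      apply hnp
      obtain ⟨q, hq⟩ := exists_span_eq_top_of_moduleLength_le_one hle
      obtain ⟨w, rfl⟩ := Submodule.Quotient.mk_surjective _ q
      have hN2le : N 2 ≤ Submodule.span S {(w : S ⧸ I)} ⊔ N 3 := by
        intro z hz
        have hmem : (Submodule.Quotient.mk (⟨z, hz⟩ : ↥(N 2)) :
            ↥(N 2) ⧸ Submodule.comap (N 2).subtype (N 3)) ∈
            Submodule.span S {Submodule.Quotient.mk w} := by
          rw [hq]
          exact Submodule.mem_top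
        obtain ⟨c, hc⟩ := Submodule.mem_span_singleton.mp hmem
        rw [← Submodule.Quotient.mk_smul] at hc
        have hsub := (Submodule.Quotient.eq _).mp hc
        have hsub' : c • (w : S ⧸ I) - z ∈ N 3 := Submodule.mem_comap.mp hsub
        have hzeq : z = c • (w : S ⧸ I) - (c • (w : S ⧸ I) - z) := by abel
        rw [hzeq, sub_eq_add_neg]
        exact Submodule.add_mem_sup (Submodule.smul_mem _ c (Submodule.mem_span_singleton_self _))
          (Submodule.neg_mem _ hsub')
      rw [← hsmulN 2] at hN2le
      have hle2 := nak_le (hfg (N 2)) hN2le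
      have hge2 : Submodule.span S {(w : S ⧸ I)} ≤ N 2 := by
        rw [Submodule.span_le, Set.singleton_subset_iff]
        exact w.2
      have heq : (m ^ 2).restrictScalars S = Submodule.span S {(w : S ⧸ I)} :=
        le_antisymm hle2 hge2
      refine ⟨(w : S ⧸ I), ?_⟩
      apply Submodule.restrictScalars_injective S _ _
      rw [heq, show Ideal.span {(w : S ⧸ I)} = Submodule.span (S ⧸ I) {(w : S ⧸ I)} from rfl,
        Submodule.restrictScalars_span S (S ⧸ I) Ideal.Quotient.mk_surjective]
    have h1lt : (1 : WithBot ℕ∞) < d 2 := not_le.mp hd2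
    have hLb : ∀ t, t ≤ s - 1 → ((t : ℕ∞) : WithBot ℕ∞) ≤ L (s + 1 - t) := by
      intro t
      induction t with
      | zero =>
        intro _
        simpa using moduleLength_nonneg
      | succ t ih =>
        intro ht
        have h1 : s + 1 - (t + 1) = s - t := by omega
        have h2 : (s - t) + 1 = s + 1 - t := by omega
        rw [h1, hLrec (s - t), h2]
        have hadd := add_le_add (ih (by omega)) (hd_ge (s - t) (by omega))
        refine le_trans (le_of_eq ?_) hadd
        push_cast
        rfl
    have hd2ge : ((2 : ℕ∞) : WithBot ℕ∞) ≤ d 2 := by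
      have hnb : d 2 ≠ ⊥ := by
        intro hbot
        rw [hbot] at h1lt
        exact absurd h1lt (by simp)
      obtain ⟨δ, hδ⟩ := WithBot.ne_bot_iff_exists.mp hnb
      rw [← hδ] at h1lt ⊢
      rw [show (1 : WithBot ℕ∞) = ((1 : ℕ∞) : WithBot ℕ∞) from rfl, WithBot.coe_lt_coe] at h1lt
      rw [WithBot.coe_le_coe]
      exact Order.add_one_le_of_lt h1lt
    have hL3 : (((s - 2 : ℕ) : ℕ∞) : WithBot ℕ∞) ≤ L 3 := by
      have h := hLb (s - 2) (by omega)
      rwa [show s + 1 - (s - 2) = 3 from by omega] at h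
    have hchain : (((e + s + 1 : ℕ) : ℕ∞) : WithBot ℕ∞) ≤ L 0 := by
      rw [hLrec 0, hLrec 1, hLrec 2, hd0, hd1]
      have hstep := add_le_add (add_le_add (add_le_add hL3 hd2ge) (le_refl
        ((e : ℕ∞) : WithBot ℕ∞))) (le_refl (1 : WithBot ℕ∞))
      refine le_trans (le_of_eq ?_) hstep
      have harith : (e + s + 1 : ℕ) = ((s - 2) + 2) + e + 1 := by omega
      rw [harith]
      push_cast
      ring
    rw [hL0] at hchain
    have hle' : (e + s + 1 : ℕ) ≤ ℓ := by exact_mod_cast hchain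
    omega
  refine ⟨⟨fun hseq => ?_, fun hp => ?_⟩, fun hseq => ?_⟩
  · obtain ⟨x, hx⟩ := principal_of_main hseq
    exact ⟨⟨x, hx⟩⟩
  · obtain ⟨⟨x, hx⟩⟩ := hp
    exact main_of_principal x hx
  · obtain ⟨x, hx⟩ := principal_of_main hseq
    refine ⟨?_, ⟨x, hx⟩, hm2ne⟩
    by_contra hvne
    have hv3 : 3 ≤ v := by omega
    have hI3 : I ≤ 𝔫 ^ 3 := le_trans hIv (Ideal.pow_le_pow_right hv3)
    obtain ⟨y', hy'mem, hy'⟩ := (hmember x 2).mp (hx ▸ Ideal.mem_span_singleton_self x)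
    have h𝔫2 : 𝔫 ^ 2 = Ideal.span {y'} := by
      apply le_antisymm
      · apply nak_le (IsNoetherian.noetherian _)
        intro t ht
        have htx : Ideal.Quotient.mk I t ∈ Ideal.span {x} := by
          rw [← hx, hmpow 2]
          exact Ideal.mem_map_of_mem _ ht
        obtain ⟨c', hc'⟩ := Ideal.mem_span_singleton'.mp htx
        obtain ⟨c, rfl⟩ := hmksurj c'
        have hcy : Ideal.Quotient.mk I (c * y') = Ideal.Quotient.mk I t := by
          rw [map_mul, hy']
          exact hc'
        have hsubI : c * y' - t ∈ I := Ideal.Quotient.eq.mp hcy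
        have hsub3 : c * y' - t ∈ 𝔫 • (𝔫 ^ 2 : Ideal S) := by
          rw [Ideal.smul_eq_mul, ← pow_succ']
          exact hI3 hsubI
        have hteq : t = c * y' + -(c * y' - t) := by ring
        rw [hteq]
        exact Submodule.add_mem_sup (Ideal.mem_span_singleton'.mpr ⟨c, rfl⟩)
          (Submodule.neg_mem _ hsub3)
      · rw [Ideal.span_le, Set.singleton_subset_iff]
        exact hy'mem
    obtain ⟨z, hz⟩ := pow_principal_of_sq_principal (A := S) h𝔫2 v (by omega)
    have hzI : z ∉ I := by
      intro hzi
      apply hnotpow v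
      apply le_antisymm hIv
      rw [hz, Ideal.span_le, Set.singleton_subset_iff]
      exact hzi
    have hIv1 : I ≤ 𝔫 ^ (v + 1) := by
      intro t ht
      have htv : t ∈ Ideal.span {z} := by
        rw [← hz]
        exact hIv ht
      obtain ⟨c, hc⟩ := Ideal.mem_span_singleton'.mp htv
      have hc𝔫 : c ∈ 𝔫 := by
        by_contra hcn
        have hcu : IsUnit c := by
          by_contra hna
          exact hcn ((IsLocalRing.mem_maximalIdeal c).mpr hna)
        obtain ⟨U, hU⟩ := hcu
        apply hzI
        have hzeq : z = (↑U⁻¹ : S) * t := by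
          rw [← hc, ← hU, ← mul_assoc, U.inv_mul, one_mul]
        rw [hzeq]
        exact Ideal.mul_mem_left _ _ ht
      rw [← hc, pow_succ']
      exact Ideal.mul_mem_mul hc𝔫 (by rw [hz]; exact Ideal.mem_span_singleton_self z)
    have hcontra := hv.2 hIv1
    omega
end

section
/- Let (S, 𝔫) be a one-dimensional Noetherian local domain, not regular, with infinite residue field and quotient field K, whose integral closure S̄ in K is a discrete valuation ring and a finitely generated S-module, and such that S ⊆ S̄ induces an isomorphism of residue fields. Let Val be the valuation of S̄ on K and set e := min{Val(a) | a ∈ 𝔫, a ≠ 0} (the multiplicity of S). Then for every 𝔫-primary ideal I of S: s(S/I) ≤ s(S/I)·e ≤ g(I), where s(S/I) is the top socle degree of S/I and g(I) is the Frobenius number of I. -/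
open IsLocalRing

/-- In the analytically irreducible, residually rational setting, with
`e = min{Val a ∣ a ∈ 𝔫, a ≠ 0}` the multiplicity of `S`, for every `𝔫`-primary ideal
`I` of `S` one has `s(S/I) ≤ s(S/I)·e ≤ g(I)`. -/
theorem socle_degree_mul_multiplicity_le_frobenius
    (S : Type*) [CommRing S] [IsDomain S] [IsNoetherianRing S] [IsLocalRing S]
    (hdim : ringKrullDim S = 1)
    (hreg : Module.finrank (ResidueField S) (CotangentSpace S) ≠ 1)
    (hk : Infinite (ResidueField S))
    (K : Type*) [Field K] [Algebra S K] [IsFractionRing S K]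
    [IsDiscreteValuationRing ↥(integralClosure S K)]
    [Module.Finite S ↥(integralClosure S K)]
    (hres : ∀ x : ↥(integralClosure S K), ∃ a : S,
      x - algebraMap S ↥(integralClosure S K) a ∈ maximalIdeal ↥(integralClosure S K))
    (t : ↥(integralClosure S K)) (ht : Irreducible t)
    (Val : K → ℤ)
    (hVal : ∀ a : K, a ≠ 0 → ∃ u : (↥(integralClosure S K))ˣ,
      a = ((u : ↥(integralClosure S K)) : K) * (t : K) ^ (Val a))
    (e : ℤ)
    (he : IsLeast {n : ℤ | ∃ a : S, a ∈ maximalIdeal S ∧ a ≠ 0 ∧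
      Val (algebraMap S K a) = n} e)
    (I : Ideal S) (hprim : I.radical = maximalIdeal S)
    (g : ℤ)
    (hg : IsGreatest {n : ℤ | ∃ a : K, a ≠ 0 ∧
      a ∉ (algebraMap S K) '' (I : Set S) ∧ Val a = n} g)
    (s : ℕ)
    (hs : IsGreatest {n : ℕ |
        ((maximalIdeal S).map (Ideal.Quotient.mk I)) ^ n ≠ ⊥} s) :
    (s : ℤ) ≤ (s : ℤ) * e ∧ (s : ℤ) * e ≤ g := by
  have coe_inj : Function.Injective (fun x : ↥(integralClosure S K) => (x : K)) :=
    Subtype.coe_injective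
  have ht0 : t ≠ 0 := ht.ne_zero
  have tK0 : (t : K) ≠ 0 := by
    intro h; exact ht0 (coe_inj (by simpa using h))
  -- every nonzero element of the integral closure has nonnegative value and unit·t^n form
  have hVnat : ∀ x : ↥(integralClosure S K), x ≠ 0 → ∃ u : (↥(integralClosure S K))ˣ,
      x = ↑u * t ^ (Val (x : K)).toNat ∧ 0 ≤ Val (x : K) := by
    intro x hx
    have hxK : (x : K) ≠ 0 := fun h => hx (coe_inj (by simpa using h))
    obtain ⟨w, hw⟩ := hVal (x : K) hxK
    have hnn : 0 ≤ Val (x : K) := by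
      by_contra hneg
      push_neg at hneg
      obtain ⟨d, hdd⟩ : ∃ d : ℕ, (-(Val (x : K))).toNat = d := ⟨_, rfl⟩
      have hd1 : 1 ≤ d := by omega
      have hid : Val (x : K) = -(d : ℤ) := by omega
      rw [hid, zpow_neg, zpow_natCast] at hw
      have hxt : (x : K) * (t : K) ^ d = ((w : ↥(integralClosure S K)) : K) := by
        rw [hw]; field_simp
      have hxtR : x * t ^ d = (w : ↥(integralClosure S K)) := by
        apply coe_inj
        show ((x * t ^ d : ↥(integralClosure S K)) : K) = _
        push_cast
        exact hxt
      have hUnit : IsUnit (t ^ d) := by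
        apply isUnit_of_mul_isUnit_right (x := x)
        rw [hxtR]; exact w.isUnit
      exact ht.not_isUnit ((isUnit_pow_iff (by omega)).mp hUnit)
    obtain ⟨n, hn⟩ : ∃ n : ℕ, (Val (x : K)).toNat = n := ⟨_, rfl⟩
    have hzn : Val (x : K) = (n : ℤ) := by omega
    rw [hzn, zpow_natCast] at hw
    refine ⟨w, ?_, hnn⟩
    rw [hn]
    apply coe_inj
    show (x : K) = ((↑w * t ^ n : ↥(integralClosure S K)) : K)
    push_cast
    exact hw
  -- uniqueness of exponents
  have huniq : ∀ (a b : ℕ) (u v : (↥(integralClosure S K))ˣ),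
      (↑u : ↥(integralClosure S K)) * t ^ a = ↑v * t ^ b → a = b := by
    have key : ∀ (a b : ℕ) (u v : (↥(integralClosure S K))ˣ),
        (↑u : ↥(integralClosure S K)) * t ^ a = ↑v * t ^ b → b ≤ a := by
      intro a b u v h
      by_contra hab
      push_neg at hab
      have hsplit : t ^ b = t ^ (b - a) * t ^ a := by
        rw [← pow_add]; congr 1; omega
      rw [hsplit, ← mul_assoc] at h
      have h2 : (↑u : ↥(integralClosure S K)) = ↑v * t ^ (b - a) :=
        mul_right_cancel₀ (pow_ne_zero a ht0) h
      have hUnit : IsUnit (t ^ (b - a)) := by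
        apply isUnit_of_mul_isUnit_right (x := (↑v : ↥(integralClosure S K)))
        rw [← h2]; exact u.isUnit
      exact ht.not_isUnit ((isUnit_pow_iff (by omega)).mp hUnit)
    intro a b u v h
    exact le_antisymm (key b a v u h.symm) (key a b u v h)
  have halg_inj : Function.Injective (algebraMap S K) := IsFractionRing.injective S K
  have hcoe : ∀ a : S, ((algebraMap S ↥(integralClosure S K) a : ↥(integralClosure S K)) : K)
      = algebraMap S K a := fun a => rfl
  have halgR_inj : Function.Injective (algebraMap S ↥(integralClosure S K)) := by
    intro a b h
    apply halg_inj
    rw [← hcoe a, ← hcoe b, h]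
  -- e ≥ 1
  have he1 : 1 ≤ e := by
    obtain ⟨a, haM, ha0, hae⟩ := he.1
    have hx0 : algebraMap S ↥(integralClosure S K) a ≠ 0 :=
      fun h => ha0 (halgR_inj (by simpa using h))
    obtain ⟨u, hu, hnn⟩ := hVnat _ hx0
    rw [hcoe a, hae] at hu hnn
    have hnot : ¬ IsUnit (algebraMap S ↥(integralClosure S K) a) := by
      have hmax : (Ideal.comap (algebraMap S ↥(integralClosure S K))
          (maximalIdeal ↥(integralClosure S K))).IsMaximal :=
        Ideal.isMaximal_comap_of_isIntegral_of_isMaximal (R := S)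
          (maximalIdeal ↥(integralClosure S K))
      have heq : Ideal.comap (algebraMap S ↥(integralClosure S K))
          (maximalIdeal ↥(integralClosure S K)) = maximalIdeal S :=
        IsLocalRing.eq_maximalIdeal hmax
      have hmem : algebraMap S ↥(integralClosure S K) a ∈
          maximalIdeal ↥(integralClosure S K) := by
        rw [← heq] at haM; exact haM
      exact fun hu' => (IsLocalRing.mem_maximalIdeal _).mp hmem hu'
    by_contra hle
    push_neg at hle
    have h0 : e.toNat = 0 := by omega
    rw [h0, pow_zero, mul_one] at hu
    exact hnot (hu ▸ u.isUnit)
  -- choose b ∈ 𝔫^s \ I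
  obtain ⟨b, hbs, hbI⟩ : ∃ b : S, b ∈ (maximalIdeal S) ^ s ∧ b ∉ I := by
    have h1 := hs.1
    simp only [Set.mem_setOf_eq] at h1
    rw [← Ideal.map_pow] at h1
    by_contra hc
    push_neg at hc
    apply h1
    rw [eq_bot_iff]
    intro y hy
    rw [Submodule.mem_bot]
    obtain ⟨b, hbmem, rfl⟩ := Ideal.mem_map_iff_of_surjective _
      Ideal.Quotient.mk_surjective |>.mp hy
    exact Ideal.Quotient.eq_zero_iff_mem.mpr (hc b hbmem)
  have hb0 : b ≠ 0 := fun h => hbI (h ▸ I.zero_mem)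
  -- image of 𝔫 lands in span {t ^ e.toNat}
  have hmapn : Ideal.map (algebraMap S ↥(integralClosure S K)) (maximalIdeal S) ≤
      Ideal.span {t ^ e.toNat} := by
    rw [Ideal.map_le_iff_le_comap]
    intro a ha
    simp only [Ideal.mem_comap]
    rcases eq_or_ne a 0 with rfl | ha0
    · simp
    have hx0 : algebraMap S ↥(integralClosure S K) a ≠ 0 :=
      fun h => ha0 (halgR_inj (by simpa using h))
    obtain ⟨u, hu, hnn⟩ := hVnat _ hx0
    rw [hcoe a] at hu hnn
    have hev : e ≤ Val (algebraMap S K a) := he.2 ⟨a, ha, ha0, rfl⟩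
    rw [Ideal.mem_span_singleton]
    refine ⟨↑u * t ^ ((Val (algebraMap S K a)).toNat - e.toNat), ?_⟩
    have hsplit : t ^ (Val (algebraMap S K a)).toNat
        = t ^ e.toNat * t ^ ((Val (algebraMap S K a)).toNat - e.toNat) := by
      rw [← pow_add]; congr 1; omega
    rw [hu, hsplit]; ring
  -- hence image of b lands in span {t ^ (e.toNat * s)}
  have hbmem : algebraMap S ↥(integralClosure S K) b ∈ Ideal.span {t ^ (e.toNat * s)} := by
    have h1 : algebraMap S ↥(integralClosure S K) b ∈
        Ideal.map (algebraMap S ↥(integralClosure S K)) ((maximalIdeal S) ^ s) :=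
      Ideal.mem_map_of_mem _ hbs
    rw [Ideal.map_pow] at h1
    have h3 := Ideal.pow_right_mono hmapn s h1
    rwa [Ideal.span_singleton_pow, ← pow_mul] at h3
  rw [Ideal.mem_span_singleton] at hbmem
  obtain ⟨c, hc⟩ := hbmem
  have hbR0 : algebraMap S ↥(integralClosure S K) b ≠ 0 :=
    fun h => hb0 (halgR_inj (by simpa using h))
  have hc0 : c ≠ 0 := by rintro rfl; rw [mul_zero] at hc; exact hbR0 hc
  obtain ⟨nc, hnc⟩ : ∃ m : ℕ, (Val ((c : ↥(integralClosure S K)) : K)).toNat = m := ⟨_, rfl⟩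
  obtain ⟨nb, hnb⟩ : ∃ m : ℕ,
      (Val ((algebraMap S ↥(integralClosure S K) b : ↥(integralClosure S K)) : K)).toNat = m :=
    ⟨_, rfl⟩
  obtain ⟨v, hv, hvnn⟩ := hVnat c hc0
  obtain ⟨u, hu, hunn⟩ := hVnat _ hbR0
  rw [hnc] at hv
  rw [hnb] at hu
  have heq2 : (↑u : ↥(integralClosure S K)) * t ^ nb = ↑v * t ^ (nc + e.toNat * s) := by
    rw [← hu, hc, hv, pow_add]; ring
  have hexp := huniq _ _ _ _ heq2
  have hgb : Val (algebraMap S K b) ≤ g := by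
    apply hg.2
    refine ⟨algebraMap S K b, ?_, ?_, rfl⟩
    · exact fun h => hb0 (halg_inj (by simpa using h))
    · rintro ⟨a, haI, hab⟩
      exact hbI ((halg_inj hab) ▸ haI)
  have hVb : (s : ℤ) * e ≤ Val (algebraMap S K b) := by
    rw [hcoe b] at hnb hunn
    have he' : (e.toNat : ℤ) = e := Int.toNat_of_nonneg (by omega)
    have hb' : ((nb : ℕ) : ℤ) = Val (algebraMap S K b) := by
      rw [← hnb]; exact Int.toNat_of_nonneg hunn
    calc (s : ℤ) * e = ((e.toNat * s : ℕ) : ℤ) := by push_cast; rw [he']; ring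
      _ ≤ ((nb : ℕ) : ℤ) := by exact_mod_cast (by omega : e.toNat * s ≤ nb)
      _ = Val (algebraMap S K b) := hb'
  refine ⟨?_, le_trans hVb hgb⟩
  nlinarith [Int.natCast_nonneg s]
end

section
/- Let (S, 𝔫) be a one-dimensional Noetherian local domain, not regular, with infinite residue field and quotient field K, whose integral closure S̄ in K is a discrete valuation ring and a finitely generated S-module, and such that S ⊆ S̄ induces an isomorphism of residue fields. Let δ = ℓ_S(S̄/S). Then for every 𝔫-primary ideal I of S: g(I) + 1 ≤ ℓ_S(S/I) + 2δ, where g(I) is the Frobenius number of I. -/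
open IsLocalRing

section Aux
set_option linter.unusedSectionVars false
variable {S : Type*} [CommRing S] [IsDomain S] {K : Type*} [Field K] [Algebra S K]
  [IsFractionRing S K]

namespace Frob

lemma coe_inj : Function.Injective (fun x : ↥(integralClosure S K) => (x : K)) :=
  Subtype.val_injective

lemma coe_pow (t : ↥(integralClosure S K)) (n : ℕ) :
    ((t ^ n : ↥(integralClosure S K)) : K) = (t : K) ^ n := by push_cast; ring

lemma coe_ne_zero {x : ↥(integralClosure S K)} (hx : x ≠ 0) : (x : K) ≠ 0 :=
  fun h => hx (by exact_mod_cast h)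

lemma coe_units_inv (x : (↥(integralClosure S K))ˣ) :
    ((↑(x⁻¹) : ↥(integralClosure S K)) : K) = (((x : ↥(integralClosure S K)) : K))⁻¹ := by
  apply eq_inv_of_mul_eq_one_left
  have : ((↑(x⁻¹) * ↑x : ↥(integralClosure S K)) : K) = ((1 : ↥(integralClosure S K)) : K) := by
    rw [x.inv_mul]
  push_cast at this
  simpa using this

lemma coe_unit_ne (x : (↥(integralClosure S K))ˣ) : ((x : ↥(integralClosure S K)) : K) ≠ 0 :=
  fun h => x.ne_zero (coe_inj (by simpa using h))

variable {t : ↥(integralClosure S K)} (ht : Irreducible t)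

include ht

lemma tK_ne : ((t : K)) ≠ 0 := fun h => ht.ne_zero (coe_inj (by simpa using h))

lemma key_unit {m : ℤ} {x : ↥(integralClosure S K)} (hx : IsUnit x)
    (h : (x : K) = (t : K) ^ m) : m = 0 := by
  rcases lt_trichotomy m 0 with hm | hm | hm
  · exfalso
    have hn : (x * t ^ (-m).toNat : ↥(integralClosure S K)) = 1 := by
      apply coe_inj
      show ((x * t ^ (-m).toNat : ↥(integralClosure S K)) : K) = ((1 : ↥(integralClosure S K)) : K)
      push_cast
      rw [h, ← zpow_natCast (t:K), Int.toNat_of_nonneg (by omega), ← zpow_add₀ (tK_ne ht)]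
      simp
    have h1 : IsUnit (t ^ (-m).toNat) := isUnit_of_mul_isUnit_right (hn ▸ isUnit_one)
    exact ht.not_isUnit ((isUnit_pow_iff (by omega : (-m).toNat ≠ 0)).mp h1)
  · exact hm
  · exfalso
    have hn : x = t ^ m.toNat := by
      apply coe_inj
      show (x : K) = ((t ^ m.toNat : ↥(integralClosure S K)) : K)
      rw [h, coe_pow, ← zpow_natCast (t:K), Int.toNat_of_nonneg (by omega)]
    exact ht.not_isUnit ((isUnit_pow_iff (by omega : m.toNat ≠ 0)).mp (hn ▸ hx))

/-- Uniqueness of the exponent in a unit-times-power representation. -/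
lemma unit_rel {a : K} {m m' : ℤ}
    (h : ∃ u : (↥(integralClosure S K))ˣ, a = ((u : ↥(integralClosure S K)) : K) * (t : K) ^ m)
    (h' : ∃ u : (↥(integralClosure S K))ˣ, a = ((u : ↥(integralClosure S K)) : K) * (t : K) ^ m') :
    m = m' := by
  obtain ⟨u, hu⟩ := h
  obtain ⟨w, hw⟩ := h'
  have key : ((↑(w⁻¹ * u) : ↥(integralClosure S K)) : K) = (t : K) ^ (m' - m) := by
    push_cast
    rw [coe_units_inv, zpow_sub₀ (tK_ne ht), inv_mul_eq_div,
      div_eq_div_iff (coe_unit_ne w) (zpow_ne_zero m (tK_ne ht))]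
    have e : ((u : ↥(integralClosure S K)) : K) * (t : K) ^ m
        = ((w : ↥(integralClosure S K)) : K) * (t : K) ^ m' := by rw [← hu, ← hw]
    linear_combination e
  have := key_unit ht (w⁻¹ * u).isUnit key
  omega

variable {Val : K → ℤ}
  (hVal : ∀ a : K, a ≠ 0 → ∃ u : (↥(integralClosure S K))ˣ,
      a = ((u : ↥(integralClosure S K)) : K) * (t : K) ^ (Val a))

include hVal

lemma val_eq_of_rep {a : K} {m : ℤ} (ha : a ≠ 0)
    (h : ∃ u : (↥(integralClosure S K))ˣ,
      a = ((u : ↥(integralClosure S K)) : K) * (t : K) ^ m) : Val a = m :=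
  unit_rel ht (hVal a ha) h

lemma val_one : Val 1 = 0 :=
  val_eq_of_rep ht hVal one_ne_zero ⟨1, by push_cast; simp⟩

lemma val_tpow (n : ℤ) : Val ((t : K) ^ n) = n :=
  val_eq_of_rep ht hVal (zpow_ne_zero _ (tK_ne ht)) ⟨1, by push_cast; simp⟩

lemma val_coe_unit (u : (↥(integralClosure S K))ˣ) :
    Val ((u : ↥(integralClosure S K)) : K) = 0 :=
  val_eq_of_rep ht hVal (coe_unit_ne u) ⟨u, by simp⟩

lemma val_mul {a b : K} (ha : a ≠ 0) (hb : b ≠ 0) : Val (a * b) = Val a + Val b := by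
  obtain ⟨u, hu⟩ := hVal a ha
  obtain ⟨w, hw⟩ := hVal b hb
  refine val_eq_of_rep ht hVal (mul_ne_zero ha hb) ⟨u * w, ?_⟩
  push_cast
  rw [zpow_add₀ (tK_ne ht)]
  calc a * b = (((u : ↥(integralClosure S K)) : K) * (t:K) ^ Val a)
      * (((w : ↥(integralClosure S K)) : K) * (t:K) ^ Val b) := by rw [← hu, ← hw]
    _ = _ := by ring

lemma val_inv {a : K} (ha : a ≠ 0) : Val a⁻¹ = -Val a := by
  have h := val_mul ht hVal ha (inv_ne_zero ha)
  rw [mul_inv_cancel₀ ha, val_one ht hVal] at h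
  omega

lemma val_neg {a : K} (ha : a ≠ 0) : Val (-a) = Val a := by
  have hm1 : Val (-1 : K) = 0 := by
    refine val_eq_of_rep ht hVal (by norm_num) ⟨-1, by push_cast; simp⟩
  have := val_mul ht hVal (show (-1 : K) ≠ 0 by norm_num) ha
  rw [neg_one_mul] at this
  omega

lemma val_nonneg_of_mem {x : ↥(integralClosure S K)} (hx : x ≠ 0) : 0 ≤ Val (x : K) := by
  by_contra hneg
  obtain ⟨u, hu⟩ := hVal (x : K) (fun h => hx (coe_inj (by simpa using h)))
  set n : ℕ := (-(Val (x:K))).toNat with hn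
  have hn1 : 1 ≤ n := by omega
  have key : (x * t ^ n : ↥(integralClosure S K)) = (u : ↥(integralClosure S K)) := by
    apply coe_inj
    show ((x * t ^ n : ↥(integralClosure S K)) : K) = _
    push_cast
    rw [hu, ← zpow_natCast (t:K), hn, Int.toNat_of_nonneg (by omega), mul_assoc,
      ← zpow_add₀ (tK_ne ht)]
    simp
  have hdvd : t ∣ (u : ↥(integralClosure S K)) := by
    rw [← key]
    exact Dvd.intro_left _ (by rw [← pow_sub_one_mul (by omega : n ≠ 0) t, ← mul_assoc])
  exact ht.not_isUnit (isUnit_of_dvd_unit hdvd u.isUnit)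

lemma exists_mem_of_val_nonneg {a : K} (ha : a ≠ 0) (h : 0 ≤ Val a) :
    ∃ x : ↥(integralClosure S K), x ≠ 0 ∧ (x : K) = a := by
  obtain ⟨u, hu⟩ := hVal a ha
  refine ⟨(u : ↥(integralClosure S K)) * t ^ (Val a).toNat, ?_, ?_⟩
  · intro h0
    apply ha
    rw [hu]
    have : (((u : ↥(integralClosure S K)) * t ^ (Val a).toNat : ↥(integralClosure S K)) : K)
        = 0 := by rw [h0]; simp
    push_cast at this
    rw [← zpow_natCast (t:K), Int.toNat_of_nonneg h] at this
    rw [this]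
  · push_cast
    rw [← zpow_natCast (t:K), Int.toNat_of_nonneg h]
    exact hu.symm

lemma val_isUnit {x : ↥(integralClosure S K)} (hx : IsUnit x) : Val (x : K) = 0 := by
  obtain ⟨u, rfl⟩ := hx
  exact val_coe_unit ht hVal u

lemma val_t : Val (t : K) = 1 := by
  have := val_tpow ht hVal 1
  rwa [zpow_one] at this

variable [IsDiscreteValuationRing ↥(integralClosure S K)]

lemma val_pos_of_nonunit {x : ↥(integralClosure S K)} (hx : x ≠ 0) (hnu : ¬IsUnit x) :
    1 ≤ Val (x : K) := by
  have hmem : x ∈ maximalIdeal ↥(integralClosure S K) := hnu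
  have hspan := (IsDiscreteValuationRing.irreducible_iff_uniformizer t).mp ht
  rw [hspan, Ideal.mem_span_singleton] at hmem
  obtain ⟨y, rfl⟩ := hmem
  have hy : y ≠ 0 := fun h => hx (by rw [h, mul_zero])
  have hcoe : ((t * y : ↥(integralClosure S K)) : K) = (t : K) * (y : K) := by push_cast; ring
  rw [hcoe, val_mul ht hVal (tK_ne ht) (fun h => hy (coe_inj (by simpa using h)))]
  have h1 := val_t ht hVal
  have h2 := val_nonneg_of_mem ht hVal hy
  omega

lemma val_add_of_lt {a b : K} (ha : a ≠ 0) (hb : b ≠ 0) (h : Val a < Val b) :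
    a + b ≠ 0 ∧ Val (a + b) = Val a := by
  set c : K := b * a⁻¹ with hc
  have hcne : c ≠ 0 := mul_ne_zero hb (inv_ne_zero ha)
  have hvc : Val c = Val b - Val a := by
    rw [hc, val_mul ht hVal hb (inv_ne_zero ha), val_inv ht hVal ha]; ring
  obtain ⟨x, hxne, hxc⟩ := exists_mem_of_val_nonneg ht hVal hcne (by omega)
  have hxnu : ¬IsUnit x := fun hu => by
    have := val_isUnit ht hVal hu
    rw [hxc] at this; omega
  have hux : IsUnit (1 + x) := by
    have := IsLocalRing.isUnit_one_sub_self_of_mem_nonunits (-x)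
      (fun hu => hxnu (by simpa using hu.neg))
    simpa using this
  have hform : a + b = a * ((1 + x : ↥(integralClosure S K)) : K) := by
    push_cast
    rw [hxc, hc]
    field_simp
  constructor
  · rw [hform]
    exact mul_ne_zero ha (fun h0 => hux.ne_zero (coe_inj (by simpa using h0)))
  · rw [hform, val_mul ht hVal ha (fun h0 => hux.ne_zero (coe_inj (by simpa using h0))),
      val_isUnit ht hVal hux]
    ring

lemma val_add_min {a b : K} (ha : a ≠ 0) (hb : b ≠ 0) (hab : a + b ≠ 0) :
    min (Val a) (Val b) ≤ Val (a + b) := by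
  rcases lt_trichotomy (Val a) (Val b) with h | h | h
  · rw [(val_add_of_lt ht hVal ha hb h).2]; omega
  · set c : K := b * a⁻¹ with hc
    have hcne : c ≠ 0 := mul_ne_zero hb (inv_ne_zero ha)
    have hvc : Val c = 0 := by
      rw [hc, val_mul ht hVal hb (inv_ne_zero ha), val_inv ht hVal ha]; omega
    obtain ⟨x, hxne, hxc⟩ := exists_mem_of_val_nonneg ht hVal hcne (by omega)
    have hform : a + b = a * ((1 + x : ↥(integralClosure S K)) : K) := by
      push_cast
      rw [hxc, hc]
      field_simp
    have h1x : ((1 + x : ↥(integralClosure S K)) : K) ≠ 0 := by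
      intro h0
      rw [hform, h0, mul_zero] at hab
      exact hab rfl
    have h1xR : (1 + x : ↥(integralClosure S K)) ≠ 0 := fun h0 => h1x (by rw [h0]; simp)
    rw [hform, val_mul ht hVal ha h1x]
    have := val_nonneg_of_mem ht hVal h1xR
    omega
  · rw [add_comm] at hab ⊢
    rw [(val_add_of_lt ht hVal hb ha h).2]; omega

lemma approx {a c : K}
    (hres : ∀ x : ↥(integralClosure S K), ∃ s : S,
      x - algebraMap S ↥(integralClosure S K) s ∈ maximalIdeal ↥(integralClosure S K))
    (ha : a ≠ 0) (hc : c ≠ 0) (h : Val a = Val c) :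
    ∃ s : S, a - algebraMap S K s * c = 0 ∨
      (a - algebraMap S K s * c ≠ 0 ∧ Val a < Val (a - algebraMap S K s * c)) := by
  set d : K := a * c⁻¹ with hd
  have hdne : d ≠ 0 := mul_ne_zero ha (inv_ne_zero hc)
  have hvd : Val d = 0 := by
    rw [hd, val_mul ht hVal ha (inv_ne_zero hc), val_inv ht hVal hc]; omega
  obtain ⟨u, hu⟩ := hVal d hdne
  rw [hvd, zpow_zero, mul_one] at hu
  obtain ⟨s, hs⟩ := hres (u : ↥(integralClosure S K))
  set e : ↥(integralClosure S K) := (u : ↥(integralClosure S K))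
    - algebraMap S ↥(integralClosure S K) s with he
  have hcoe : ((e : ↥(integralClosure S K)) : K) = d - algebraMap S K s := by
    rw [he]; push_cast; rw [← hu]
  have hform : a - algebraMap S K s * c = c * ((e : ↥(integralClosure S K)) : K) := by
    rw [hcoe, hd]
    field_simp
  refine ⟨s, ?_⟩
  by_cases he0 : e = 0
  · left
    rw [hform, he0]
    simp
  · right
    have heK : ((e : ↥(integralClosure S K)) : K) ≠ 0 :=
      fun h0 => he0 (coe_inj (by simpa using h0))
    constructor
    · rw [hform]; exact mul_ne_zero hc heK
    · rw [hform, val_mul ht hVal hc heK, h]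
      have := val_pos_of_nonunit ht hVal he0 hs
      omega

omit ht hVal

/-- From a finite strictly decreasing family of submodules indexed by a finset of `ℤ`,
bound the cardinality by the Krull dimension plus one. -/
lemma card_le_succ_of_strictAnti {β : Type*} [Preorder β] (T : Finset ℤ) (f : ℤ → β)
    (hf : ∀ m ∈ T, ∀ m' ∈ T, m < m' → f m' < f m) {δ : ℕ}
    (hdim : Order.krullDim β = ((δ : ℕ∞) : WithBot ℕ∞)) : T.card ≤ δ + 1 := by
  rcases Finset.eq_empty_or_nonempty T with rfl | hT
  · simp
  have hc : 1 ≤ T.card := Finset.card_pos.mpr hT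
  set c := T.card with hcdef
  let e := T.orderIsoOfFin (rfl : T.card = c)
  let p : LTSeries β :=
    ⟨c - 1, fun i => f (e ⟨c - 1 - (i : ℕ), by omega⟩), by
      intro i
      have hi : (i : ℕ) < c - 1 := i.isLt
      apply hf
      · exact Subtype.mem _
      · exact Subtype.mem _
      · have : (⟨c - 1 - ((i.succ : Fin (c - 1 + 1)) : ℕ), by omega⟩ : Fin c)
            < ⟨c - 1 - ((i.castSucc : Fin (c - 1 + 1)) : ℕ), by omega⟩ := by
          simp only [Fin.mk_lt_mk, Fin.coe_castSucc, Fin.val_succ]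
          omega
        exact e.strictMono this⟩
  have hlen := Order.LTSeries.length_le_krullDim p
  rw [hdim] at hlen
  have : ((c - 1 : ℕ) : WithBot ℕ∞) ≤ ((δ : ℕ) : WithBot ℕ∞) := hlen
  have hle : c - 1 ≤ δ := by exact_mod_cast this
  omega

section Modules
variable (t : ↥(integralClosure S K)) (ht : Irreducible t) (Val : K → ℤ)
  (hVal : ∀ a : K, a ≠ 0 → ∃ u : (↥(integralClosure S K))ˣ,
      a = ((u : ↥(integralClosure S K)) : K) * (t : K) ^ (Val a))

/-- The `S`-submodule of the integral closure of elements of value at least `m`. -/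
def Vsub (m : ℤ) : Submodule S ↥(integralClosure S K) where
  carrier := {x | x = 0 ∨ m ≤ Val (x : K)}
  zero_mem' := Or.inl rfl
  add_mem' := by
    intro x y hx hy
    by_cases hx0 : x = 0
    · simpa [hx0] using hy
    by_cases hy0 : y = 0
    · simpa [hy0] using hx
    by_cases hxy : x + y = 0
    · exact Or.inl hxy
    right
    have hxv : m ≤ Val (x : K) := hx.resolve_left hx0
    have hyv : m ≤ Val (y : K) := hy.resolve_left hy0
    have hco : ((x + y : ↥(integralClosure S K)) : K) = (x : K) + (y : K) := by push_cast; ring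
    rw [hco]
    have := val_add_min ht hVal (coe_ne_zero hx0) (coe_ne_zero hy0)
      (by rw [← hco]; exact coe_ne_zero hxy)
    omega
  smul_mem' := by
    intro c x hx
    by_cases h0 : c • x = 0
    · exact Or.inl h0
    right
    have hx0 : x ≠ 0 := by rintro rfl; exact h0 (smul_zero c)
    have hxv : m ≤ Val (x : K) := hx.resolve_left hx0
    have hco : ((c • x : ↥(integralClosure S K)) : K) = algebraMap S K c * (x : K) := by
      rw [SetLike.val_smul, Algebra.smul_def]
    have hcK : algebraMap S K c ≠ 0 := by
      intro h
      exact coe_ne_zero h0 (by rw [hco, h, zero_mul])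
    have hcR : (algebraMap S ↥(integralClosure S K) c) ≠ 0 := by
      intro h
      apply hcK
      rw [show algebraMap S K c = ((algebraMap S ↥(integralClosure S K) c :
        ↥(integralClosure S K)) : K) from rfl, h]
      rfl
    have hcv : 0 ≤ Val (algebraMap S K c) :=
      val_nonneg_of_mem ht hVal hcR
    rw [hco, val_mul ht hVal hcK (coe_ne_zero hx0)]
    omega

lemma mem_Vsub {m : ℤ} {x : ↥(integralClosure S K)} :
    x ∈ Vsub t ht Val hVal m ↔ x = 0 ∨ m ≤ Val (x : K) := Iff.rfl

lemma Vsub_antitone {m m' : ℤ} (h : m ≤ m') :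
    Vsub t ht Val hVal m' ≤ Vsub t ht Val hVal m := by
  intro x hx
  rcases hx with h0 | hv
  · exact Or.inl h0
  · exact Or.inr (le_trans h hv)

/-- The ideal of `S` of elements of value at least `m`. -/
def Jideal (m : ℤ) : Ideal S :=
  (Vsub t ht Val hVal m).comap (Algebra.linearMap S ↥(integralClosure S K))

lemma mem_Jideal {m : ℤ} {s : S} :
    s ∈ Jideal t ht Val hVal m ↔ s = 0 ∨ m ≤ Val (algebraMap S K s) := by
  rw [Jideal, Submodule.mem_comap]
  constructor
  · rintro (h0 | hv)
    · left
      have h0' : algebraMap S ↥(integralClosure S K) s = 0 := h0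
      have hz : algebraMap S K s = 0 := by
        have := congrArg (fun x : ↥(integralClosure S K) => (x : K)) h0'
        simpa using this
      exact IsFractionRing.injective S K (by simpa using hz)
    · exact Or.inr hv
  · rintro (rfl | hv)
    · exact Or.inl (map_zero _)
    · exact Or.inr hv

end Modules
end Frob
end Aux


open Frob in
/-- In the analytically irreducible, residually rational setting, with
`δ = ℓ_S(S̄/S)`, for every `𝔫`-primary ideal `I` of `S` one has
`g(I) + 1 ≤ ℓ_S(S/I) + 2δ`. -/
theorem frobenius_add_one_le
    (S : Type*) [CommRing S] [IsDomain S] [IsNoetherianRing S] [IsLocalRing S]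
    (hdim : ringKrullDim S = 1)
    (hreg : Module.finrank (ResidueField S) (CotangentSpace S) ≠ 1)
    (hk : Infinite (ResidueField S))
    (K : Type*) [Field K] [Algebra S K] [IsFractionRing S K]
    [IsDiscreteValuationRing ↥(integralClosure S K)]
    [Module.Finite S ↥(integralClosure S K)]
    (hres : ∀ x : ↥(integralClosure S K), ∃ a : S,
      x - algebraMap S ↥(integralClosure S K) a ∈ maximalIdeal ↥(integralClosure S K))
    (t : ↥(integralClosure S K)) (ht : Irreducible t)
    (Val : K → ℤ)
    (hVal : ∀ a : K, a ≠ 0 → ∃ u : (↥(integralClosure S K))ˣ,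
      a = ((u : ↥(integralClosure S K)) : K) * (t : K) ^ (Val a))
    (δ : ℕ)
    (hδ : moduleLength S
        (↥(integralClosure S K) ⧸
          LinearMap.range (Algebra.linearMap S ↥(integralClosure S K))) = (δ : ℕ∞))
    (I : Ideal S) (hprim : I.radical = maximalIdeal S)
    (ℓ : ℕ) (hℓ : moduleLength S (S ⧸ I) = (ℓ : ℕ∞))
    (g : ℤ)
    (hg : IsGreatest {n : ℤ | ∃ a : K, a ≠ 0 ∧
      a ∉ (algebraMap S K) '' (I : Set S) ∧ Val a = n} g) :
    g + 1 ≤ (ℓ : ℤ) + 2 * (δ : ℤ) := by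
  replace hδ : Order.krullDim (Submodule S
      (↥(integralClosure S K) ⧸
        LinearMap.range (Algebra.linearMap S ↥(integralClosure S K)))) = ((δ : ℕ∞) : WithBot ℕ∞) := hδ
  replace hℓ : Order.krullDim (Submodule S (S ⧸ I)) = ((ℓ : ℕ∞) : WithBot ℕ∞) := hℓ
  classical
  have hinj : Function.Injective (algebraMap S K) := IsFractionRing.injective S K
  have halg : ∀ s : S, ((algebraMap S ↥(integralClosure S K) s :
      ↥(integralClosure S K)) : K) = algebraMap S K s := fun s => rfl
  -- elements of valuation greater than g lie in the image of I
  have hL4 : ∀ a : K, a ≠ 0 → g < Val a → ∃ s : S, s ∈ I ∧ algebraMap S K s = a := by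
    intro a ha hga
    by_contra hno
    push_neg at hno
    have hmem : Val a ≤ g := hg.2 ⟨a, ha, fun ⟨s, hsI, hse⟩ => (hno s hsI) hse, rfl⟩
    omega
  -- I is proper, so g ≥ 0
  have h1I : (1 : S) ∉ I := by
    intro h1
    have : I = ⊤ := Ideal.eq_top_of_isUnit_mem I h1 isUnit_one
    rw [this, Ideal.radical_top] at hprim
    exact (IsLocalRing.maximalIdeal.isMaximal S).ne_top hprim.symm
  have hg0 : 0 ≤ g := by
    have h1img : (1 : K) ∉ (algebraMap S K) '' (I : Set S) := by
      rintro ⟨s, hsI, hs1⟩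
      have : s = 1 := hinj (by simpa using hs1)
      exact h1I (this ▸ hsI)
    have := hg.2 ⟨1, one_ne_zero, h1img, rfl⟩
    rw [val_one ht hVal] at this
    exact this
  -- the value predicates
  set vSp : ℤ → Prop := fun n => ∃ s : S, s ≠ 0 ∧ Val (algebraMap S K s) = n with hvSp
  set vIp : ℤ → Prop := fun n => ∃ s : S, s ∈ I ∧ s ≠ 0 ∧ Val (algebraMap S K s) = n with hvIp
  have hvIS : ∀ n, vIp n → vSp n := fun n ⟨s, _, h1, h2⟩ => ⟨s, h1, h2⟩
  set T : Finset ℤ := Finset.Icc 0 g with hT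
  set A : Finset ℤ := T.filter vIp with hA
  set B : Finset ℤ := T.filter (fun n => vSp n ∧ ¬ vIp n) with hB
  set C : Finset ℤ := T.filter (fun n => ¬ vSp n) with hC
  -- the partition
  have hsplit : T.card = A.card + B.card + C.card := by
    have key1 := Finset.card_filter_add_card_filter_not (s := T) (p := vIp)
    have key2 := Finset.card_filter_add_card_filter_not
      (s := T.filter (fun n => ¬ vIp n)) (p := vSp)
    have e1 : (T.filter (fun n => ¬ vIp n)).filter vSp = B := by
      ext n
      simp only [hB, Finset.mem_filter, Finset.filter_filter]
      exact ⟨fun ⟨h1, h2, h3⟩ => ⟨h1, h3, h2⟩, fun ⟨h1, h2, h3⟩ => ⟨h1, h3, h2⟩⟩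
    have e2 : (T.filter (fun n => ¬ vIp n)).filter (fun n => ¬ vSp n) = C := by
      ext n
      simp only [hC, Finset.mem_filter, Finset.filter_filter]
      exact ⟨fun ⟨h1, h2, h3⟩ => ⟨h1, h3⟩, fun ⟨h1, h2⟩ => ⟨h1, fun hi => h2 (hvIS n hi), h2⟩⟩
    rw [e1, e2] at key2
    rw [← hA] at key1
    omega
  have hCbound : C.card ≤ δ := by
    set p : Submodule S ↥(integralClosure S K) :=
      LinearMap.range (Algebra.linearMap S ↥(integralClosure S K)) with hp
    set G : ℤ → Submodule S (↥(integralClosure S K) ⧸ p) :=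
      fun m => Submodule.map p.mkQ (Vsub t ht Val hVal m) with hGdef
    have hf : ∀ m ∈ insert (g+1) C, ∀ m' ∈ insert (g+1) C, m < m' → G m' < G m := by
      intro m hm m' hm' hlt
      have hm'le : m' ≤ g + 1 := by
        rcases Finset.mem_insert.mp hm' with rfl | h
        · omega
        · have := Finset.mem_Icc.mp (Finset.mem_filter.mp h).1
          omega
      have hmC : m ∈ C := by
        rcases Finset.mem_insert.mp hm with rfl | h
        · omega
        · exact h
      have hmT := Finset.mem_Icc.mp (Finset.mem_filter.mp hmC).1
      have hmnS : ¬ vSp m := (Finset.mem_filter.mp hmC).2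
      refine lt_of_le_not_ge
        (Submodule.map_mono (Vsub_antitone t ht Val hVal hlt.le)) ?_
      intro hle
      set w : ↥(integralClosure S K) := t ^ m.toNat with hw
      have hwK : (w : K) = (t : K) ^ (m.toNat : ℤ) := by
        rw [hw, coe_pow, zpow_natCast]
      have hwne : (w : K) ≠ 0 := by
        rw [hwK]; exact zpow_ne_zero _ (tK_ne ht)
      have hwR : w ≠ 0 := fun h => hwne (by rw [h]; simp)
      have hvw : Val (w : K) = m := by
        rw [hwK, val_tpow ht hVal]; omega
      have hwV : w ∈ Vsub t ht Val hVal m := Or.inr (by omega)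
      have hq : p.mkQ w ∈ G m' := hle (Submodule.mem_map_of_mem hwV)
      obtain ⟨y, hy, heq⟩ := hq
      have hd : y - w ∈ p := (Submodule.Quotient.eq p).mp heq
      obtain ⟨s, hs⟩ := hd
      have hsK : algebraMap S K s = (y : K) - (w : K) := by
        have := congrArg (fun x : ↥(integralClosure S K) => (x : K)) hs
        simpa [halg] using this
      by_cases hy0 : y = 0
      · subst hy0
        have hsK' : algebraMap S K s = -(w : K) := by rw [hsK]; simp
        have hsne : s ≠ 0 := by
          rintro rfl
          rw [map_zero] at hsK'
          exact hwne (by rw [← neg_neg ((w : K)), ← hsK']; simp)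
        exact hmnS ⟨s, hsne, by rw [hsK', val_neg ht hVal hwne, hvw]⟩
      · have hyv : m' ≤ Val (y : K) := hy.resolve_left hy0
        by_cases hs0 : s = 0
        · subst hs0
          rw [map_zero] at hsK
          have : (y : K) = (w : K) := by linear_combination -hsK
          rw [this, hvw] at hyv
          omega
        · have hyne : (y : K) ≠ 0 := coe_ne_zero hy0
          have hvneg : Val (-(w : K)) = m := by rw [val_neg ht hVal hwne, hvw]
          have hlt2 : Val (-(w : K)) < Val (y : K) := by omega
          have hval := (val_add_of_lt ht hVal (neg_ne_zero.mpr hwne) hyne hlt2).2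
          have hform : algebraMap S K s = -(w : K) + (y : K) := by rw [hsK]; ring
          exact hmnS ⟨s, hs0, by rw [hform, hval, hvneg]⟩
    have hcard := card_le_succ_of_strictAnti (insert (g+1) C) G hf hδ
    have hnot : (g+1) ∉ C := by
      intro h
      have := Finset.mem_Icc.mp (Finset.mem_filter.mp h).1
      omega
    rw [Finset.card_insert_of_notMem hnot] at hcard
    omega
  have hBbound : B.card ≤ ℓ := by
    set H : ℤ → Submodule S (S ⧸ I) :=
      fun m => Submodule.map I.mkQ (Jideal t ht Val hVal m) with hHdef
    have hJanti : ∀ {m m' : ℤ}, m ≤ m' →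
        Jideal t ht Val hVal m' ≤ Jideal t ht Val hVal m := by
      intro m m' h s hs
      exact Submodule.mem_comap.mpr (Vsub_antitone t ht Val hVal h (Submodule.mem_comap.mp hs))
    have hf : ∀ m ∈ insert (g+1) B, ∀ m' ∈ insert (g+1) B, m < m' → H m' < H m := by
      intro m hm m' hm' hlt
      have hm'le : m' ≤ g + 1 := by
        rcases Finset.mem_insert.mp hm' with rfl | h
        · omega
        · have := Finset.mem_Icc.mp (Finset.mem_filter.mp h).1
          omega
      have hmB : m ∈ B := by
        rcases Finset.mem_insert.mp hm with rfl | h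
        · omega
        · exact h
      obtain ⟨hmS, hmnI⟩ := (Finset.mem_filter.mp hmB).2
      obtain ⟨sm, hsm0, hsmv⟩ := hmS
      refine lt_of_le_not_ge (Submodule.map_mono (hJanti hlt.le)) ?_
      intro hle
      have hsmK : algebraMap S K sm ≠ 0 := fun h => hsm0 (hinj (by simpa using h))
      have hwJ : sm ∈ Jideal t ht Val hVal m :=
        (mem_Jideal t ht Val hVal).mpr (Or.inr (by omega))
      have hq : I.mkQ sm ∈ H m' := hle (Submodule.mem_map_of_mem hwJ)
      obtain ⟨y, hy, heq⟩ := hq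
      have hd : y - sm ∈ I := (Submodule.Quotient.eq I).mp heq
      by_cases hy0 : y = 0
      · subst hy0
        have : sm ∈ I := by
          have := I.neg_mem hd
          simpa using this
        exact hmnI ⟨sm, this, hsm0, hsmv⟩
      · have hyv : m' ≤ Val (algebraMap S K y) :=
          ((mem_Jideal t ht Val hVal).mp hy).resolve_left hy0
        by_cases hb0 : y - sm = 0
        · have : y = sm := by linear_combination hb0
          rw [this, hsmv] at hyv
          omega
        · have hbK : algebraMap S K (y - sm)
              = -(algebraMap S K sm) + algebraMap S K y := by
            rw [map_sub]; ring
          have hyK : algebraMap S K y ≠ 0 := fun h => hy0 (hinj (by simpa using h))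
          have hvneg : Val (-(algebraMap S K sm)) = m := by
            rw [val_neg ht hVal hsmK, hsmv]
          have hval := (val_add_of_lt ht hVal (neg_ne_zero.mpr hsmK) hyK (by omega)).2
          exact hmnI ⟨y - sm, hd, hb0, by rw [hbK, hval, hvneg]⟩
    have hcard := card_le_succ_of_strictAnti (insert (g+1) B) H hf hℓ
    have hnot : (g+1) ∉ B := by
      intro h
      have := Finset.mem_Icc.mp (Finset.mem_filter.mp h).1
      omega
    rw [Finset.card_insert_of_notMem hnot] at hcard
    omega
  have hAbound : A.card ≤ C.card := by
    apply Finset.card_le_card_of_injOn (fun n => g - n)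
    · intro n hn
      beta_reduce
      have hnT := Finset.mem_Icc.mp (Finset.mem_filter.mp hn).1
      obtain ⟨b, hbI, hb0, hbv⟩ := (Finset.mem_filter.mp hn).2
      refine Finset.mem_filter.mpr ⟨Finset.mem_Icc.mpr (by omega), ?_⟩
      rintro ⟨s, hs0, hsv⟩
      obtain ⟨a, ha0, haI, hav⟩ := hg.1
      have hbK : algebraMap S K b ≠ 0 := fun h => hb0 (hinj (by simpa using h))
      have hsK : algebraMap S K s ≠ 0 := fun h => hs0 (hinj (by simpa using h))
      set c : K := algebraMap S K (s * b) with hc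
      have hcK : c = algebraMap S K s * algebraMap S K b := by rw [hc, map_mul]
      have hc0 : c ≠ 0 := by rw [hcK]; exact mul_ne_zero hsK hbK
      have hvc : Val c = g := by
        rw [hcK, val_mul ht hVal hsK hbK, hsv, hbv]; omega
      obtain ⟨u, hu⟩ := approx ht hVal hres ha0 hc0 (by omega)
      rcases hu with h0 | ⟨hne, hgt⟩
      · apply haI
        refine ⟨u * (s * b), I.mul_mem_left _ (I.mul_mem_left _ hbI), ?_⟩
        rw [map_mul]
        have : a = algebraMap S K u * c := by linear_combination h0
        rw [← hc, ← this]
      · obtain ⟨w, hwI, hwe⟩ := hL4 _ hne (by omega)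
        apply haI
        refine ⟨w + u * (s * b), I.add_mem hwI (I.mul_mem_left _ (I.mul_mem_left _ hbI)), ?_⟩
        rw [map_add, map_mul, ← hc, hwe]
        ring
    · intro x _ y _ h
      simpa using h
  have hTcard : (T.card : ℤ) = g + 1 := by
    rw [hT, Int.card_Icc]
    omega
  have : (T.card : ℕ) ≤ δ + ℓ + δ := by omega
  omega
end

section
/- Let (S, 𝔫) be a one-dimensional Noetherian local domain, not regular, with infinite residue field and quotient field K, whose integral closure S̄ in K is a discrete valuation ring and a finitely generated S-module, and such that S ⊆ S̄ induces an isomorphism of residue fields. Let δ = ℓ_S(S̄/S). Then for every 𝔫-primary ideal I of S: ℓ_S(I/𝔠_I) ≤ δ, where 𝔠_I = (I :_K S̄) is the largest S̄-ideal contained in I. -/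
open IsLocalRing

lemma absorb {S R : Type*} [CommRing S] [CommRing R] [Algebra S R] (π : R)
    (hres' : ∀ x : R, ∃ a : S, π ∣ (x - algebraMap S R a))
    (N N' : Submodule S R) (c : ℕ) (hC : ∀ t : R, π ^ c * t ∈ N)
    (hN : N ≤ N')
    (hass : ∀ x ∈ N', ∃ y ∈ N, ∃ u : Rˣ, x = y * u) :
    N' ≤ N := by
  have claim : ∀ j : ℕ, ∀ x ∈ N', π ^ c ∣ x * π ^ j → x ∈ N := by
    intro j
    induction j with
    | zero =>
      intro x _ hdvd
      obtain ⟨t, ht⟩ := by simpa using hdvd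
      exact ht ▸ hC t
    | succ j ih =>
      intro x hx hdvd
      obtain ⟨y, hyN, u, rfl⟩ := hass x hx
      obtain ⟨a, d, hd⟩ := hres' (u : R)
      have hxa : y * u - a • y = y * π * d := by
        rw [Algebra.smul_def, mul_comm ((algebraMap S R) a) y, ← mul_sub, hd]; ring
      have hx' : y * u - a • y ∈ N' := sub_mem hx (hN (N.smul_mem a hyN))
      have hdvd' : π ^ c ∣ (y * u - a • y) * π ^ j := by
        rw [hxa]
        have h2 : π ^ c ∣ y * π ^ (j+1) * u := by
          rw [show y * π ^ (j+1) * u = y * u * π ^ (j+1) by ring]; exact hdvd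
        calc π ^ c ∣ y * π ^ (j+1) := ((Units.isUnit u).dvd_mul_right).mp h2
          _ ∣ y * π * d * π ^ j := ⟨d, by ring⟩
      have h3 := ih _ hx' hdvd'
      have h4 : (y * u - a • y) + a • y ∈ N := N.add_mem h3 (N.smul_mem a hyN)
      simpa using h4
  intro x hx
  exact claim c x hx ⟨x, mul_comm _ _⟩

lemma gap_not_mem {S R : Type*} [CommRing S] [CommRing R] [IsLocalRing R] [Algebra S R]
    (π : R) (hπ : Irreducible π) (g : ℕ)
    (hgap : ∀ (s : S) (u : Rˣ), algebraMap S R s ≠ π ^ g * u)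
    (W : Submodule S R) (hW : ∀ x ∈ W, π ^ (g+1) ∣ x) :
    π ^ g ∉ LinearMap.range (Algebra.linearMap S R) ⊔ W := by
  intro h
  obtain ⟨y, hy, z, hz, hyz⟩ := Submodule.mem_sup.mp h
  obtain ⟨s, rfl⟩ := hy
  obtain ⟨r, hr⟩ := hW z hz
  have hs : Algebra.linearMap S R s = π ^ g * (1 - π * r) := by
    have : Algebra.linearMap S R s = π ^ g - z := by
      rw [← hyz]; ring
    rw [this, hr, pow_succ]; ring
  have hu : IsUnit (1 - π * r) := by
    by_contra hnu
    have h1 : (1 : R) ∈ maximalIdeal R := by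
      have : (1 : R) = (1 - π * r) + π * r := by ring
      rw [this]
      exact add_mem ((mem_maximalIdeal _).mpr hnu)
        (Ideal.mul_mem_right _ _ ((mem_maximalIdeal _).mpr hπ.not_isUnit))
    exact (Ideal.ne_top_iff_one _).mp (IsLocalRing.maximalIdeal.isMaximal R).ne_top h1
  obtain ⟨u, hu⟩ := hu
  exact hgap s u (by rw [← hu] at hs; exact hs)

/-- The conductor of an `S`-submodule `M` of `R`: elements whose multiples all lie in `M`. -/
def conductorIdealAux {S R : Type*} [CommRing S] [CommRing R] [Algebra S R]
    (M : Submodule S R) : Ideal R where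
  carrier := {y : R | ∀ x : R, y * x ∈ M}
  add_mem' := fun {y z} hy hz x => by rw [add_mul]; exact M.add_mem (hy x) (hz x)
  zero_mem' := fun x => by rw [zero_mul]; exact M.zero_mem
  smul_mem' := fun r y hy x => by
    simp only [smul_eq_mul, Set.mem_setOf_eq] at *
    rw [mul_assoc, mul_comm r, mul_assoc]
    exact hy _

lemma mem_conductorIdealAux {S R : Type*} [CommRing S] [CommRing R] [Algebra S R]
    {M : Submodule S R} {y : R} : y ∈ conductorIdealAux M ↔ ∀ x : R, y * x ∈ M := Iff.rfl

set_option maxHeartbeats 1000000 in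
/-- In the analytically irreducible, residually rational setting, with
`δ = ℓ_S(S̄/S)`, for every `𝔫`-primary ideal `I` of `S` and its conductor
`𝔠_I = (I :_K S̄)` (the largest `S̄`-ideal contained in `I`) one has `ℓ_S(I/𝔠_I) ≤ δ`. -/
theorem length_ideal_mod_conductor_le
    (S : Type*) [CommRing S] [IsDomain S] [IsNoetherianRing S] [IsLocalRing S]
    (hdim : ringKrullDim S = 1)
    (hreg : Module.finrank (ResidueField S) (CotangentSpace S) ≠ 1)
    (hk : Infinite (ResidueField S))
    (K : Type*) [Field K] [Algebra S K] [IsFractionRing S K]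
    [IsDiscreteValuationRing ↥(integralClosure S K)]
    [Module.Finite S ↥(integralClosure S K)]
    (hres : ∀ x : ↥(integralClosure S K), ∃ a : S,
      x - algebraMap S ↥(integralClosure S K) a ∈ maximalIdeal ↥(integralClosure S K))
    (I : Ideal S) (hprim : I.radical = maximalIdeal S)
    (CI : Ideal S)
    (hCI : ∀ a : S, a ∈ CI ↔ ∀ x : ↥(integralClosure S K),
      algebraMap S K a * (x : K) ∈ (algebraMap S K) '' (I : Set S)) :
    moduleLength S (↥I ⧸ Submodule.comap I.subtype CI) ≤
      moduleLength S
        (↥(integralClosure S K) ⧸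
          LinearMap.range (Algebra.linearMap S ↥(integralClosure S K))) := by
  classical
  set R := ↥(integralClosure S K) with hR
  set ι := algebraMap S R with hι
  -- basic injectivity facts
  have hcoe_inj : Function.Injective (Subtype.val : R → K) := Subtype.val_injective
  have hcoe_alg : ∀ a : S, (ι a : K) = algebraMap S K a := by
    intro a
    rw [IsScalarTower.algebraMap_apply S R K]
    rfl
  have hcast : ∀ (a : S) (x : R), ((ι a * x : R) : K) = algebraMap S K a * (x : K) := by
    intro a x
    rw [hι]
    push_cast
    rfl
  have hι_inj : Function.Injective ι := by
    intro a b hab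
    apply IsFractionRing.injective S K
    rw [← hcoe_alg, ← hcoe_alg, hab]
  -- the image of I in R
  set M : Submodule S R := Submodule.map (Algebra.linearMap S R) I with hM
  have hmemM : ∀ z : R, z ∈ M ↔ ∃ a ∈ I, ι a = z := by
    intro z
    simp [hM, Submodule.mem_map, hι]
  have hcoeM : ∀ z : R, (z : K) ∈ algebraMap S K '' (I : Set S) ↔ z ∈ M := by
    intro z
    constructor
    · rintro ⟨a, ha, haz⟩
      refine (hmemM z).mpr ⟨a, ha, hcoe_inj ?_⟩
      rw [hcoe_alg]; exact haz
    · intro hz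
      obtain ⟨a, ha, rfl⟩ := (hmemM z).mp hz
      exact ⟨a, ha, (hcoe_alg a).symm⟩
  have hCI' : ∀ a : S, a ∈ CI ↔ ∀ x : R, ι a * x ∈ M := by
    intro a
    rw [hCI]
    refine forall_congr' fun x => ?_
    rw [← hcoeM]
    rw [hcast a x]
  -- the conductor-type ideal of R
  set Cbar : Ideal R := conductorIdealAux M with hCbar
  have hmemCbar : ∀ y : R, y ∈ Cbar ↔ ∀ x : R, y * x ∈ M := fun y => mem_conductorIdealAux
  have hCbarM : ∀ y ∈ Cbar, y ∈ M := fun y hy => by simpa using ((hmemCbar y).mp hy) 1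
  have hCbarCI : ∀ a : S, a ∈ CI ↔ ι a ∈ Cbar := fun a => (hCI' a)
  -- reduce to a statement about chains
  set W : Submodule S ↥I := Submodule.comap I.subtype CI with hW
  set toR : ↥I →ₗ[S] R := (Algebra.linearMap S R).comp (Submodule.subtype I) with htoR
  have htoR_inj : Function.Injective toR := by
    intro a b hab
    exact Subtype.ext (hι_inj (show ι (a : S) = ι (b : S) from hab))
  rw [moduleLength, moduleLength, Order.krullDim, Order.krullDim]
  apply iSup_le
  intro p
  obtain ⟨n, pf, hpstep⟩ := p
  show (n : WithBot ℕ∞) ≤ _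
  have hpmono : StrictMono pf := Fin.strictMono_iff_lt_succ.mpr hpstep
  rcases Nat.eq_zero_or_pos n with hn0 | hnpos
  · rw [hn0]
    exact le_trans (by norm_num) (le_iSup _ (RelSeries.singleton _ ⊥))
  set N : Fin (n + 1) → Submodule S R :=
    fun i => Submodule.map toR (Submodule.comap W.mkQ (pf i)) with hNdef
  have hNmono : StrictMono N := by
    intro a b hab
    have h1 : Submodule.comap W.mkQ (pf a) < Submodule.comap W.mkQ (pf b) := by
      refine lt_of_le_of_ne (Submodule.comap_mono (hpmono hab).le) fun hEq => ?_
      exact absurd (Submodule.comap_injective_of_surjective W.mkQ_surjective hEq)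
        (hpmono hab).ne
    refine lt_of_le_of_ne (Submodule.map_mono h1.le) fun hEq => ?_
    exact absurd (Submodule.map_injective_of_injective htoR_inj hEq) h1.ne
  have hNM : ∀ i, N i ≤ M := by
    intro i z hz
    obtain ⟨w, _, rfl⟩ := hz
    exact (hmemM _).mpr ⟨(w : S), w.2, rfl⟩
  have hCbarN : ∀ (i) (y : R), y ∈ Cbar → y ∈ N i := by
    intro i y hy
    obtain ⟨a, haI, rfl⟩ := (hmemM y).mp (hCbarM y hy)
    have haCI : a ∈ CI := (hCI' a).mpr fun x => (hmemCbar _).mp hy x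
    refine ⟨⟨a, haI⟩, ?_, rfl⟩
    have hmem : (⟨a, haI⟩ : ↥I) ∈ W := haCI
    have hq : W.mkQ ⟨a, haI⟩ = 0 := by
      rw [Submodule.mkQ_apply, Submodule.Quotient.mk_eq_zero]; exact hmem
    refine Submodule.mem_comap.mpr ?_
    rw [hq]
    exact (pf i).zero_mem
  -- a nonzero element of I
  obtain ⟨x0, hx0mem, hx0not⟩ :=
    SetLike.exists_of_lt (hNmono (Fin.castSucc_lt_succ (i := (⟨0, hnpos⟩ : Fin n))))
  have hx0ne : x0 ≠ 0 := fun h => hx0not (h ▸ (N _).zero_mem)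
  obtain ⟨a0, ha0I, ha0⟩ := (hmemM x0).mp (hNM _ hx0mem)
  have ha0ne : a0 ≠ 0 := fun h => hx0ne (by rw [← ha0, h, map_zero])
  -- common denominator for R over S
  obtain ⟨gk, g, hgspan⟩ := Module.Finite.exists_fin (R := S) (M := R)
  obtain ⟨b, hb⟩ := IsLocalization.exist_integer_multiples_of_finite
    (nonZeroDivisors S) (fun i : Fin gk => ((g i : R) : K))
  have hden : ∀ x : R, ∃ s : S, ι (b : S) * x = ι s := by
    intro x
    have hx : x ∈ Submodule.span S (Set.range g) := by rw [hgspan]; trivial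
    induction hx using Submodule.span_induction with
    | mem y hy =>
      obtain ⟨i, rfl⟩ := hy
      obtain ⟨s, hs⟩ := hb i
      refine ⟨s, hcoe_inj ?_⟩
      rw [hcast, hcoe_alg s, ← Algebra.smul_def]
      first
      | exact hs.symm
      | exact hs
    | zero => exact ⟨0, by simp⟩
    | add y z _ _ hy hz =>
      obtain ⟨s, hs⟩ := hy; obtain ⟨t, ht⟩ := hz
      exact ⟨s + t, by rw [mul_add, hs, ht, map_add]⟩
    | smul r y _ hy =>
      obtain ⟨s, hs⟩ := hy
      refine ⟨r * s, ?_⟩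
      rw [Algebra.smul_def, map_mul, ← hs, ← hι]; ring
  have hCbar_ne : Cbar ≠ ⊥ := by
    intro hbot
    have hy : ι ((b : S) * a0) ∈ Cbar := by
      intro t
      obtain ⟨s, hs⟩ := hden t
      have heq : ι ((b : S) * a0) * t = ι (a0 * s) := by
        rw [map_mul, map_mul, mul_assoc, mul_comm (ι a0) t, ← mul_assoc, hs, mul_comm]
      rw [heq]
      exact (hmemM _).mpr ⟨a0 * s, I.mul_mem_right s ha0I, rfl⟩
    rw [hbot, Ideal.mem_bot] at hy
    have hba : (b : S) * a0 = 0 := hι_inj (by rw [hy, map_zero])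
    exact ha0ne ((mul_eq_zero.mp hba).resolve_left (nonZeroDivisors.coe_ne_zero b))
  obtain ⟨π, hπ⟩ := IsDiscreteValuationRing.exists_irreducible R
  obtain ⟨c, hc⟩ := IsDiscreteValuationRing.ideal_eq_span_pow_irreducible hCbar_ne hπ
  have hπc_mem : π ^ c ∈ Cbar := by rw [hc]; exact Ideal.subset_span rfl
  have hCbar_dvd : ∀ y ∈ Cbar, π ^ c ∣ y := by
    intro y hy
    rw [hc] at hy
    exact Ideal.mem_span_singleton.mp hy
  have hC_N : ∀ (i) (t : R), π ^ c * t ∈ N i :=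
    fun i t => hCbarN i _ (Ideal.mul_mem_right t Cbar hπc_mem)
  have hres' : ∀ x : R, ∃ a : S, π ∣ (x - ι a) := by
    intro x
    obtain ⟨a, ha⟩ := hres x
    exact ⟨a, Ideal.mem_span_singleton.mp (hπ.maximalIdeal_eq ▸ ha)⟩
  -- choose elements realizing new valuations at each step of the chain
  have hstep2 : ∀ i : Fin n, ∃ x ∈ N i.succ, ∀ y ∈ N i.castSucc, ∀ u : Rˣ, x ≠ y * u := by
    intro i
    by_contra hcon
    push_neg at hcon
    have hlt := hNmono (Fin.castSucc_lt_succ (i := i))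
    exact absurd (absorb π hres' _ _ c (hC_N i.castSucc) hlt.le hcon) hlt.not_ge
  choose x hxmem hxprop using hstep2
  have hxne : ∀ i, x i ≠ 0 := by
    intro i h
    exact hxprop i 0 ((N i.castSucc).zero_mem) 1 (by rw [h, Units.val_one, zero_mul])
  choose m u hxu using fun i => IsDiscreteValuationRing.eq_unit_mul_pow_irreducible (hxne i) hπ
  have hmc : ∀ i, m i < c := by
    intro i
    by_contra hge
    push_neg at hge
    have hdvd : π ^ c ∣ x i := by
      rw [hxu i]
      exact Dvd.dvd.mul_left (pow_dvd_pow π hge) _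
    obtain ⟨t, ht⟩ := hdvd
    have hmem : x i ∈ Cbar := by rw [ht]; exact Ideal.mul_mem_right t Cbar hπc_mem
    exact hxprop i (x i) (hCbarN _ _ hmem) 1 (by rw [Units.val_one, mul_one])
  have hkey : ∀ i j : Fin n, i < j → m i ≠ m j := by
    intro i j hlt hm
    have hmem : x i ∈ N j.castSucc := by
      refine hNmono.monotone (show i.succ ≤ j.castSucc from ?_) (hxmem i)
      rw [Fin.succ_le_castSucc_iff]
      exact hlt
    refine hxprop j (x i) hmem ((u i)⁻¹ * u j) ?_
    rw [hxu j, hxu i, hm, Units.val_mul]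
    rw [show (↑(u i) : R) * π ^ (m j) * (↑((u i)⁻¹) * ↑(u j))
        = (↑(u i) * ↑((u i)⁻¹)) * (↑(u j) * π ^ (m j)) by ring, Units.mul_inv, one_mul]
  have hminj : Function.Injective m := by
    intro i j hij
    by_contra hne
    rcases Ne.lt_or_gt hne with hlt | hlt
    · exact hkey i j hlt hij
    · exact hkey j i hlt hij.symm
  set g : Fin n → ℕ := fun i => c - 1 - m i with hg
  have hgi : ∀ i, m i ≤ c - 1 := fun i => Nat.le_pred_of_lt (hmc i)
  have hginj : Function.Injective g := by
    intro i j hij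
    apply hminj
    have h1 : c - 1 - g i = m i := Nat.sub_sub_self (hgi i)
    have h2 : c - 1 - g j = m j := Nat.sub_sub_self (hgi j)
    rw [← h1, ← h2, hij]
  have hcpos : 0 < c := lt_of_le_of_lt (Nat.zero_le _) (hmc ⟨0, hnpos⟩)
  have hcc : c = (c - 1) + 1 := (Nat.succ_pred_eq_of_pos hcpos).symm
  have hgap : ∀ (i : Fin n) (s : S) (w : Rˣ), ι s ≠ π ^ (g i) * w := by
    intro i s w heq
    have hzM : ι s * x i ∈ M := by
      have h0 := M.smul_mem s (hNM _ (hxmem i))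
      rwa [Algebra.smul_def, ← hι] at h0
    have hc1 : g i + m i = c - 1 := Nat.sub_add_cancel (hgi i)
    have hzval : ι s * x i = π ^ (c - 1) * ↑(w * u i) := by
      rw [heq, hxu i, Units.val_mul, ← hc1, pow_add]; ring
    have hmemc1 : π ^ (c - 1) ∈ Cbar := by
      intro t
      set e : R := ↑((w * u i)⁻¹) * t with he
      obtain ⟨a, d, hd⟩ := hres' e
      have ht : π ^ (c - 1) * t = (ι s * x i) * e := by
        rw [hzval, mul_assoc, he, Units.mul_inv_cancel_left]
      have hsubst : e = π * d + ι a := by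
        rw [← hd]; ring
      have h2 : (ι s * x i) * (ι a) ∈ M := by
        have h0 := M.smul_mem a hzM
        rwa [Algebra.smul_def, ← hι, mul_comm (ι a)] at h0
      have h3 : (ι s * x i) * (π * d) ∈ M := by
        have hpc : π ^ c = π ^ (c - 1) * π := by rw [← pow_succ, ← hcc]
        have heq3 : (ι s * x i) * (π * d) = π ^ c * (↑(w * u i) * d) := by
          rw [hzval, hpc]; ring
        rw [heq3]
        exact hCbarM _ (Ideal.mul_mem_right _ Cbar hπc_mem)
      have hsum : (ι s * x i) * e = (ι s * x i) * (π * d) + (ι s * x i) * (ι a) := by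
        rw [hsubst]; ring
      rw [ht, hsum]
      exact M.add_mem h3 h2
    obtain ⟨r, hr⟩ := hCbar_dvd _ hmemc1
    have hne0 : π ^ (c - 1) ≠ 0 := pow_ne_zero _ hπ.ne_zero
    have hpc : π ^ c = π ^ (c - 1) * π := by rw [← pow_succ, ← hcc]
    have h1 : π ^ (c - 1) * 1 = π ^ (c - 1) * (π * r) := by
      rw [mul_one]
      conv_lhs => rw [hr, hpc]
      ring
    exact hπ.not_isUnit (IsUnit.of_mul_eq_one _ (mul_left_cancel₀ hne0 h1).symm)
  -- build a chain in S̄/S from the gaps g i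
  set S' : Submodule S R := LinearMap.range (Algebra.linearMap S R) with hS'
  set G : Finset ℕ := Finset.image g Finset.univ with hG
  have hGcard : G.card = n := by
    rw [hG, Finset.card_image_of_injective _ hginj, Finset.card_fin]
  set f : Fin n → ℕ := fun j => ((G.orderIsoOfFin hGcard j : ℕ)) with hf
  have hfmono : StrictMono f := by
    intro a b hab
    exact (G.orderIsoOfFin hGcard).strictMono hab
  have hfgap : ∀ (j : Fin n) (s : S) (w : Rˣ), ι s ≠ π ^ (f j) * w := by
    intro j
    have hmem : f j ∈ G := (G.orderIsoOfFin hGcard j).2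
    rw [hG] at hmem
    obtain ⟨i, _, hi⟩ := Finset.mem_image.mp hmem
    intro s w
    rw [← hi]
    exact hgap i s w
  set F : ℕ → ℕ := fun t => if h : t < n then f ⟨t, h⟩ else 0 with hF
  set E : Fin (n + 1) → Submodule S R := fun j =>
    if (j : ℕ) = 0 then S'
    else S' ⊔ Submodule.restrictScalars S (Ideal.span {π ^ (F (n - (j : ℕ)))}) with hE
  have hS'le : ∀ j, S' ≤ E j := by
    intro j
    rw [hE]
    dsimp only
    split
    · exact le_rfl
    · exact le_sup_left
  have hEstep : ∀ j : Fin n, E j.castSucc < E j.succ := by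
    intro j
    have hjsucc : ((j.succ : Fin (n + 1)) : ℕ) = j.val + 1 := Fin.val_succ j
    have hjcast : ((j.castSucc : Fin (n + 1)) : ℕ) = j.val := Fin.coe_castSucc j
    have ht1 : n - (j.val + 1) < n := Nat.sub_lt hnpos (by omega)
    have hF1 : F (n - (j.val + 1)) = f ⟨n - (j.val + 1), ht1⟩ := dif_pos ht1
    have hEsucc : E j.succ = S' ⊔ Submodule.restrictScalars S
        (Ideal.span {π ^ (F (n - (j.val + 1)))}) := by
      rw [hE]
      dsimp only
      rw [hjsucc, if_neg (by omega)]
    rcases Nat.eq_zero_or_pos j.val with hj0 | hjpos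
    · have hEcast : E j.castSucc = S' := by
        rw [hE]
        dsimp only
        rw [hjcast, hj0, if_pos rfl]
      rw [hEcast, hEsucc]
      refine lt_of_le_of_ne le_sup_left fun hEq => ?_
      have hmem : π ^ (F (n - (j.val + 1))) ∈ S' ⊔ Submodule.restrictScalars S
          (Ideal.span {π ^ (F (n - (j.val + 1)))}) :=
        Submodule.mem_sup_right (Ideal.subset_span rfl)
      rw [← hEq] at hmem
      obtain ⟨s, hs⟩ := hmem
      refine hfgap ⟨_, ht1⟩ s 1 ?_
      rw [← hF1, Units.val_one, mul_one]
      exact hs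
    · have ht0 : n - j.val < n := Nat.sub_lt hnpos (by omega)
      have hF0 : F (n - j.val) = f ⟨n - j.val, ht0⟩ := dif_pos ht0
      have hEcast : E j.castSucc = S' ⊔ Submodule.restrictScalars S
          (Ideal.span {π ^ (F (n - j.val))}) := by
        rw [hE]
        dsimp only
        rw [hjcast, if_neg (by omega)]
      have hflt : F (n - (j.val + 1)) < F (n - j.val) := by
        rw [hF1, hF0]
        refine hfmono ?_
        rw [Fin.mk_lt_mk]
        omega
      rw [hEcast, hEsucc]
      refine lt_of_le_of_ne (sup_le_sup_left (fun z hz => ?_) _) fun hEq => ?_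
      · exact (Ideal.span_singleton_le_span_singleton.mpr (pow_dvd_pow π hflt.le)) hz
      · have hmem : π ^ (F (n - (j.val + 1))) ∈ S' ⊔ Submodule.restrictScalars S
            (Ideal.span {π ^ (F (n - (j.val + 1)))}) :=
          Submodule.mem_sup_right (Ideal.subset_span rfl)
        rw [← hEq] at hmem
        refine gap_not_mem π hπ (F (n - (j.val + 1))) ?_
          (Submodule.restrictScalars S (Ideal.span {π ^ (F (n - j.val))})) ?_ hmem
        · intro s w
          rw [hF1]
          exact hfgap _ s w
        · intro z hz
          exact dvd_trans (pow_dvd_pow π (by omega)) (Ideal.mem_span_singleton.mp hz)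
  have hQstep : ∀ j : Fin n,
      Submodule.map S'.mkQ (E j.castSucc) < Submodule.map S'.mkQ (E j.succ) := by
    intro j
    have h := hEstep j
    refine lt_of_le_of_ne (Submodule.map_mono h.le) fun hEq => ?_
    have h1 := congrArg (Submodule.comap S'.mkQ) hEq
    rw [Submodule.comap_map_mkQ, Submodule.comap_map_mkQ,
      sup_eq_right.mpr (hS'le _), sup_eq_right.mpr (hS'le _)] at h1
    exact h.ne h1
  exact le_iSup_of_le
    (LTSeries.mk n (fun j => Submodule.map S'.mkQ (E j))
      (Fin.strictMono_iff_lt_succ.mpr hQstep)) le_rfl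
end
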